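/- arXiv:2105.11167 — 4 statements merged into one kernel-verified Lean document; each statement's English description precedes it below -/
import Mathlib

section
/- Let (G,T) be a graft and let F be a join of (G,T). Then F subseteq E(G) is a minimum join of (G,T) if and only if there is no circuit C in G with w_F(C) < 0. -/
/-!
Common definitions: finite simple graphs given as (vertex set, edge set) pairs,
grafts, joins, weights/distances, ears, bipartite grafts, combs, quasicombs,
critical grafts, effective ear grafts.
-/

/-- A finite simple graph on an ambient (finite) vertex type `V`:
a set of vertices and a set of (non-loop) edges between them. -/
structure FinGraph (V : Type*) where
  verts : Set V
  edges : Set (Sym2 V)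
  not_isDiag : ∀ e ∈ edges, ¬ e.IsDiag
  mem_verts : ∀ e ∈ edges, ∀ x ∈ e, x ∈ verts

namespace FinGraph

variable {V : Type*}

/-- Adjacency. -/
def Adj (G : FinGraph V) (u v : V) : Prop := s(u, v) ∈ G.edges

/-- Degree of a vertex. -/
noncomputable def deg (G : FinGraph V) (v : V) : ℕ := {e ∈ G.edges | v ∈ e}.ncard

/-- `G` is connected. -/
def Connected (G : FinGraph V) : Prop :=
  G.verts.Nonempty ∧ ∀ u ∈ G.verts, ∀ v ∈ G.verts, Relation.ReflTransGen G.Adj u v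

/-- `H` is a subgraph of `G`. -/
def IsSubgraph (H G : FinGraph V) : Prop := H.verts ⊆ G.verts ∧ H.edges ⊆ G.edges

/-- `(G, T)` is a graft: every connected component of `G` contains an even
number of vertices of `T`. -/
def IsGraft (G : FinGraph V) (T : Set V) : Prop :=
  T ⊆ G.verts ∧ ∀ v ∈ G.verts, Even {u ∈ T | Relation.ReflTransGen G.Adj v u}.ncard

/-- `F` is a join of `(G, T)`: a vertex is incident to an odd number of edges
of `F` iff it lies in `T`. -/
def IsJoin (G : FinGraph V) (T : Set V) (F : Set (Sym2 V)) : Prop :=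
  F ⊆ G.edges ∧ ∀ v : V, (Odd {e ∈ F | v ∈ e}.ncard ↔ v ∈ T)

/-- `ν(G, T)`: the minimum cardinality of a join of `(G, T)`. -/
noncomputable def nu (G : FinGraph V) (T : Set V) : ℕ :=
  sInf {n | ∃ F, G.IsJoin T F ∧ F.ncard = n}

/-- `F` is a minimum join of `(G, T)`. -/
def IsMinJoin (G : FinGraph V) (T : Set V) (F : Set (Sym2 V)) : Prop :=
  G.IsJoin T F ∧ F.ncard = G.nu T

/-- The `F`-weight of a (sub)graph `H`: `|E(H) ∖ F| − |E(H) ∩ F|`. -/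
noncomputable def wF (F : Set (Sym2 V)) (H : FinGraph V) : ℤ :=
  ((H.edges \ F).ncard : ℤ) - ((H.edges ∩ F).ncard : ℤ)

/-- `P` is a path (graph): connected, all degrees at most two, and some vertex
of degree less than two. -/
def IsPathGraph (P : FinGraph V) : Prop :=
  P.Connected ∧ (∀ v ∈ P.verts, P.deg v ≤ 2) ∧ ∃ v ∈ P.verts, P.deg v < 2

/-- `P` is a circuit: connected and every vertex has degree two. -/
def IsCircuitGraph (P : FinGraph V) : Prop :=
  P.Connected ∧ ∀ v ∈ P.verts, P.deg v = 2

/-- `P` is a path with ends `x` and `y`. -/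
def IsPathBetween (P : FinGraph V) (x y : V) : Prop :=
  P.IsPathGraph ∧ x ∈ P.verts ∧ y ∈ P.verts ∧
    ∀ v ∈ P.verts, (P.deg v ≤ 1 ↔ v = x ∨ v = y)

/-- The `F`-distance between `u` and `v` in `G`: the minimum `F`-weight of a
path of `G` between `u` and `v`. -/
noncomputable def distF (G : FinGraph V) (F : Set (Sym2 V)) (u v : V) : ℤ :=
  sInf {w | ∃ P : FinGraph V, P.IsSubgraph G ∧ P.IsPathBetween u v ∧ wF F P = w}

/-- A path `P` of `G` between `u` and `v` is `F`-shortest if it has minimum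
`F`-weight among all such paths. -/
def IsShortestPath (G : FinGraph V) (F : Set (Sym2 V)) (P : FinGraph V) (u v : V) : Prop :=
  P.IsSubgraph G ∧ P.IsPathBetween u v ∧
    ∀ Q : FinGraph V, Q.IsSubgraph G → Q.IsPathBetween u v → wF F P ≤ wF F Q

/-- The graph consisting of the single vertex `r`. -/
def single (r : V) : FinGraph V where
  verts := {r}
  edges := ∅
  not_isDiag := by intro e he; exact absurd he (Set.notMem_empty e)
  mem_verts := by intro e he; exact absurd he (Set.notMem_empty e)

/-- The sum `G + H` of two graphs. -/
def sum (G H : FinGraph V) : FinGraph V where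
  verts := G.verts ∪ H.verts
  edges := G.edges ∪ H.edges
  not_isDiag := by
    rintro e (he | he)
    · exact G.not_isDiag e he
    · exact H.not_isDiag e he
  mem_verts := by
    rintro e (he | he) x hx
    · exact Or.inl (G.mem_verts e he x hx)
    · exact Or.inr (H.mem_verts e he x hx)

/-- `P` is a round ear relative to `X` with bonds `s` and `t`: either a path
whose ends `s ≠ t` are exactly its bonds, or a circuit sharing exactly the one
vertex `s = t` with `X`. -/
def IsRoundEar (P : FinGraph V) (X : Set V) (s t : V) : Prop :=
  P.edges.Nonempty ∧
    ((s ≠ t ∧ P.IsPathBetween s t ∧ P.verts ∩ X = {s, t}) ∨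
      (s = t ∧ P.IsCircuitGraph ∧ P.verts ∩ X = {s}))

/-- `P` is a straight ear relative to `X` with bond `t`: a path exactly one of
whose ends, namely `t`, is a bond, and with no other bonds. -/
def IsStraightEar (P : FinGraph V) (X : Set V) (t : V) : Prop :=
  P.edges.Nonempty ∧ (∃ v, v ≠ t ∧ P.IsPathBetween v t) ∧ P.verts ∩ X = {t}

/-- `P` is an ear relative to `X`. -/
def IsEar (P : FinGraph V) (X : Set V) : Prop :=
  (∃ s t, P.IsRoundEar X s t) ∨ ∃ t, P.IsStraightEar X t

/-- `(G, T; A, B)` is a bipartite graft with (ordered) color classes `A, B`. -/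
def IsBipartiteGraft (G : FinGraph V) (T A B : Set V) : Prop :=
  G.IsGraft T ∧ Disjoint A B ∧ A ∪ B = G.verts ∧
    ∀ e ∈ G.edges, ∃ a ∈ A, ∃ b ∈ B, e = s(a, b)

/-- A comb: a bipartite graft with `B ⊆ T` and `ν(G, T) = |B|`. -/
def IsComb (G : FinGraph V) (T A B : Set V) : Prop :=
  G.IsBipartiteGraft T A B ∧ B ⊆ T ∧ G.nu T = B.ncard

/-- A quasicomb: a bipartite graft with `ν(G, T) = |B ∩ T|`. -/
def IsQuasicomb (G : FinGraph V) (T A B : Set V) : Prop :=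
  G.IsBipartiteGraft T A B ∧ G.nu T = (B ∩ T).ncard

/-- A path `P` between `x` and `y` is `F`-balanced (w.r.t. the tooth set `Bt`)
if every vertex of `V(P) ∩ Bt ∖ {x, y}` is incident in `P` to exactly one edge
of `F`. -/
def IsBalancedPath (P : FinGraph V) (Bt : Set V) (F : Set (Sym2 V)) (x y : V) : Prop :=
  P.IsPathBetween x y ∧
    ∀ v ∈ (P.verts ∩ Bt) \ {x, y}, {e ∈ P.edges ∩ F | v ∈ e}.ncard = 1

/-- `M` is a perfect matching of the subgraph of `G` induced on `S`:
`M ⊆ E(G)`, all ends of edges of `M` lie in `S`, and every vertex of `S` is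
incident to exactly one edge of `M`. -/
def IsPerfectMatchingOn (G : FinGraph V) (S : Set V) (M : Set (Sym2 V)) : Prop :=
  M ⊆ G.edges ∧ (∀ e ∈ M, ∀ x ∈ e, x ∈ S) ∧ ∀ v ∈ S, {e ∈ M | v ∈ e}.ncard = 1

/-- `G` is factor-critical: for every vertex `v`, `G − v` has a perfect
matching. -/
def FactorCritical (G : FinGraph V) : Prop :=
  ∀ v ∈ G.verts, ∃ M, G.IsPerfectMatchingOn (G.verts \ {v}) M

/-- `(G, T)` is a factor-critical graft with root `r`: a connected graft with
`ν(G, T) = ν(G, T Δ {r, v})` for every vertex `v ≠ r`. -/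
def FactorCriticalGraft (G : FinGraph V) (T : Set V) (r : V) : Prop :=
  G.Connected ∧ G.IsGraft T ∧ r ∈ G.verts ∧
    ∀ v ∈ G.verts \ {r}, G.nu T = G.nu (symmDiff T {r, v})

/-- `(G, T; A, B)` is a critical bipartite graft (critical quasicomb) with root
`r ∈ B`: connected, and `ν(G,T) − ν(G, T Δ {x,r})` is `1` for `x ∈ A` and `0`
for `x ∈ B`. -/
def IsCriticalBipGraft (G : FinGraph V) (T A B : Set V) (r : V) : Prop :=
  G.IsBipartiteGraft T A B ∧ G.Connected ∧ r ∈ B ∧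
    (∀ x ∈ A, (G.nu T : ℤ) - (G.nu (symmDiff T {x, r}) : ℤ) = 1) ∧
    (∀ x ∈ B, (G.nu T : ℤ) - (G.nu (symmDiff T {x, r}) : ℤ) = 0)

/-- `(P, T'; A', B')` is an ear graft relative to the bipartite graft
`(G, T; A, B)`. -/
def IsEarGraft (G : FinGraph V) (A B : Set V) (P : FinGraph V) (T' A' B' : Set V) : Prop :=
  P.IsBipartiteGraft T' A' B' ∧ P.IsEar G.verts ∧ A ∩ B' = ∅ ∧ A' ∩ B = ∅

/-- `(P, T'; A', B')` is an effective ear graft relative to the bipartite graft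
`(G, T; A, B)` with bonds `s` and `t` (with `s = t` both for circuit round ears
and for straight ears). Writing `T̂ = T Δ T'`, `Â = A ∪ A'`, `B̂ = B ∪ B'` for
the data of the sum graft:
(i) every vertex of `V(P) ∖ {s, t}` lying in `B̂` belongs to `T̂`;
(ii) no bond lying in `B̂` belongs to `T̂`;
(iii) if `P` is a straight ear with bond `s` and other end `v`, then it is not
the case that `v ∈ Â ∧ v ∈ T̂` and not the case that `s ∈ Â ∧ s ∉ T̂`. -/
def IsEffectiveEarGraft (G : FinGraph V) (T A B : Set V) (P : FinGraph V)
    (T' A' B' : Set V) (s t : V) : Prop :=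
  P.IsBipartiteGraft T' A' B' ∧ A ∩ B' = ∅ ∧ A' ∩ B = ∅ ∧
    (P.IsRoundEar G.verts s t ∨ (s = t ∧ P.IsStraightEar G.verts s)) ∧
    (∀ v ∈ (P.verts \ {s, t}) ∩ (B ∪ B'), v ∈ symmDiff T T') ∧
    (s ∈ B ∪ B' → s ∉ symmDiff T T') ∧ (t ∈ B ∪ B' → t ∉ symmDiff T T') ∧
    (∀ v, P.IsStraightEar G.verts s → v ∈ P.verts → P.deg v ≤ 1 → v ≠ s →
      (¬(v ∈ A ∪ A' ∧ v ∈ symmDiff T T') ∧ ¬(s ∈ A ∪ A' ∧ s ∉ symmDiff T T')))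

end FinGraph


section Aux

set_option linter.unusedSectionVars false
open SimpleGraph

variable {V : Type*} [DecidableEq V] {G : SimpleGraph V}

/-- A path from `v` to `v` is nil. -/
lemma path_loop_nil {v : V} (p : G.Walk v v) (hp : p.IsPath) : p = Walk.nil := by
  cases p with
  | nil => rfl
  | cons h q =>
    exfalso
    have := hp.support_nodup
    rw [Walk.support_cons] at this
    exact (List.nodup_cons.mp this).1 q.end_mem_support

/-- In a path from `w` to `v` with `w ≠ v`, exactly one edge contains `v`. -/
lemma path_end_countP {w v : V} (q : G.Walk w v) (hq : q.IsPath) (hne : w ≠ v) :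
    q.edges.countP (fun e => v ∈ e) = 1 := by
  induction q with
  | nil => exact absurd rfl hne
  | @cons a x b h r ih =>
    have hr : r.IsPath := hq.of_cons
    rw [Walk.edges_cons, List.countP_cons]
    by_cases hxb : x = b
    · subst hxb
      have : r = Walk.nil := path_loop_nil r hr
      subst this
      simp [hne.symm]
    · have h1 : r.edges.countP (fun e => b ∈ e) = 1 := ih hr hxb
      have hba : b ≠ a := by
        intro hba; subst hba
        have := hq.support_nodup
        rw [Walk.support_cons] at this
        exact (List.nodup_cons.mp this).1 r.end_mem_support
      have hnb : ¬ (b ∈ s(a, x)) := by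
        simp only [Sym2.mem_iff]
        push_neg
        exact ⟨hba, Ne.symm hxb⟩
      simp [h1, hnb]

/-- In a cycle, every support vertex is in exactly two edges. -/
lemma cycle_countP {u v : V} (c : G.Walk u u) (hc : c.IsCycle) (hv : v ∈ c.support) :
    c.edges.countP (fun e => v ∈ e) = 2 := by
  have hrot := (c.rotate_edges v hv).perm.countP_eq (fun e => v ∈ e)
  rw [← hrot]
  have hc' : (c.rotate v hv).IsCycle := hc.rotate hv
  generalize hq : c.rotate v hv = c' at *
  cases c' with
  | nil => exact absurd hc' (Walk.IsCycle.not_of_nil)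
  | @cons a x b h r =>
    rw [Walk.cons_isCycle_iff] at hc'
    have hxv : x ≠ v := fun hxv => by subst hxv; exact G.irrefl h
    rw [Walk.edges_cons, List.countP_cons]
    have h1 : r.edges.countP (fun e => v ∈ e) = 1 := path_end_countP r hc'.1 hxv
    simp [h1]

/-- Reach every support vertex from the start, using only edges of the walk. -/
lemma walk_reflTransGen {a b : V} (p : G.Walk a b) (S : Set (Sym2 V))
    (hsub : ∀ e ∈ p.edges, e ∈ S) :
    ∀ v ∈ p.support, Relation.ReflTransGen (fun x y => s(x, y) ∈ S) a v := by
  induction p with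
  | nil =>
    intro v hv
    rw [Walk.support_nil, List.mem_singleton] at hv
    subst hv; exact Relation.ReflTransGen.refl
  | @cons a x b h r ih =>
    intro v hv
    have hstep : Relation.ReflTransGen (fun x y => s(x, y) ∈ S) a x :=
      Relation.ReflTransGen.single (hsub s(a, x) (by simp [Walk.edges_cons]))
    rw [Walk.support_cons, List.mem_cons] at hv
    rcases hv with rfl | hv
    · exact Relation.ReflTransGen.refl
    · exact hstep.trans (ih (fun e he => hsub e (by simp [Walk.edges_cons, he])) v hv)

/-- If a path from `w` to `v` contains the edge `s(v,w)`, it is that single edge. -/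
lemma path_edge_single {w v : V} (q : G.Walk w v) (hq : q.IsPath) (hne : w ≠ v)
    (he : s(v, w) ∈ q.edges) : q.edges = [s(w, v)] := by
  cases q with
  | nil => simp at he
  | @cons a x b h r =>
    rw [Walk.cons_isPath_iff] at hq
    rw [Walk.edges_cons, List.mem_cons] at he
    rcases he with he | he
    · have hxv : v = x := by
        rw [Sym2.eq_iff] at he
        rcases he with ⟨hvw, _⟩ | ⟨hvx, _⟩
        · exact absurd hvw.symm hne
        · exact hvx
      subst hxv
      have : r = Walk.nil := path_loop_nil r hq.1
      subst this
      simp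
    · exact absurd (Walk.snd_mem_support_of_mem_edges r he) hq.2

/-- A finite graph with an edge in which every degree is even contains a cycle. -/
lemma exists_cycle_of_even [Fintype V] (hne : ∃ e, e ∈ G.edgeSet)
    (hdeg : ∀ v : V, Even ((G.neighborSet v).ncard)) :
    ∃ (u : V) (c : G.Walk u u), c.IsCycle := by
  classical
  set S : Set ℕ := {n | ∃ (u v : V) (p : G.Walk u v), p.IsPath ∧ p.length = n} with hS
  have hbdd : BddAbove S := by
    refine ⟨Fintype.card V, ?_⟩
    rintro n ⟨u, v, p, hp, rfl⟩
    exact le_of_lt hp.length_lt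
  have h1S : 1 ∈ S := by
    obtain ⟨e, he⟩ := hne
    induction e with
    | h a b =>
      rw [mem_edgeSet] at he
      exact ⟨a, b, Walk.cons he Walk.nil, by simp [Walk.cons_isPath_iff, he.ne], by simp⟩
  have hSne : S.Nonempty := ⟨1, h1S⟩
  set N := sSup S with hN
  obtain ⟨u, v, p, hp, hlen⟩ : N ∈ S := Nat.sSup_mem hSne hbdd
  have hN1 : 1 ≤ N := le_csSup hbdd h1S
  -- all neighbors of v lie on the support of p
  have hnbr : ∀ z, G.Adj v z → z ∈ p.support := by
    intro z hz
    by_contra hzs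
    have hp' : (Walk.cons hz.symm p.reverse).IsPath := by
      rw [Walk.cons_isPath_iff]
      exact ⟨hp.reverse, by rwa [Walk.support_reverse, List.mem_reverse]⟩
    have : N + 1 ∈ S := ⟨z, u, _, hp', by simp [hlen]⟩
    have := le_csSup hbdd this
    omega
  -- v has a neighbor: the penultimate vertex of p
  have hpy : ∃ y, G.Adj v y := by
    cases hrev : p.reverse with
    | nil =>
      exfalso
      have : p.length = 0 := by
        have := congrArg Walk.length hrev
        rw [Walk.length_reverse] at this
        simpa using this
      omega
    | cons h r => exact ⟨_, h⟩
  obtain ⟨y, hy⟩ := hpy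
  -- v has a second neighbor w ≠ y
  have hdeg2 : 1 < (G.neighborSet v).ncard := by
    have h1 : 1 ≤ (G.neighborSet v).ncard := by
      rw [Nat.one_le_iff_ne_zero]
      intro h0
      rw [Set.ncard_eq_zero (Set.toFinite _)] at h0
      exact (Set.eq_empty_iff_forall_notMem.mp h0) y hy
    rcases hdeg v with ⟨k, hk⟩
    omega
  obtain ⟨w, hw, hwy⟩ := Set.exists_ne_of_one_lt_ncard hdeg2 y
  rw [mem_neighborSet] at hw
  -- both y and w are on p, distinct from v
  have hyv : y ≠ v := fun h => G.irrefl (h ▸ hy)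
  have hwv : w ≠ v := fun h => G.irrefl (h ▸ hw)
  have hys : y ∈ p.support := hnbr y hy
  have hws : w ∈ p.support := hnbr w hw
  -- for a neighbor z on p, either we find a cycle or the suffix is a single edge
  have key : ∀ z (hz : G.Adj v z), z ∈ p.support → z ≠ v →
      (∃ (a : V) (c : G.Walk a a), c.IsCycle) ∨ p.edges.getLast? = some s(z, v) := by
    intro z hz hzs hzv
    set q := p.dropUntil z hzs with hq
    have hqp : q.IsPath := hp.dropUntil hzs
    by_cases hmem : s(v, z) ∈ q.edges
    · right
      have hqe : q.edges = [s(z, v)] := path_edge_single q hqp hzv hmem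
      have hspec := p.take_spec hzs
      have : p.edges = (p.takeUntil z hzs).edges ++ q.edges := by
        rw [← Walk.edges_append, hspec]
      rw [this, hqe]
      simp
    · left
      exact ⟨v, Walk.cons hz q, Walk.cons_isCycle_iff _ _ |>.mpr ⟨hqp, hmem⟩⟩
  rcases key y hy hys hyv with hc | hly
  · exact hc
  rcases key w hw hws hwv with hc | hlw
  · exact hc
  exfalso
  rw [hly] at hlw
  have : s(w, v) = s(y, v) := (Option.some.inj hlw).symm
  rw [Sym2.eq_iff] at this
  rcases this with ⟨h1, _⟩ | ⟨h1, h2⟩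
  · exact hwy h1
  · exact hwv h1

end Aux


open SimpleGraph in
/-- From a nonempty even set of non-diagonal edges, extract a circuit. -/
lemma exists_circuit {V : Type*} [Fintype V] [DecidableEq V] (D : Set (Sym2 V))
    (hd : ∀ e ∈ D, ¬ e.IsDiag) (hne : D.Nonempty)
    (hev : ∀ v : V, Even {e ∈ D | v ∈ e}.ncard) :
    ∃ C : FinGraph V, C.IsCircuitGraph ∧ C.edges ⊆ D ∧ C.edges.Nonempty := by
  classical
  set H := SimpleGraph.fromEdgeSet D with hH
  have hedge : H.edgeSet = D := by
    rw [hH, edgeSet_fromEdgeSet]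
    ext e
    simp only [Set.mem_diff, Set.mem_setOf_eq]
    exact ⟨fun h => h.1, fun h => ⟨h, hd e h⟩⟩
  have hinc : ∀ v : V, H.incidenceSet v = {e ∈ D | v ∈ e} := by
    intro v
    rw [SimpleGraph.incidenceSet, hedge]
  have hev' : ∀ v : V, Even ((H.neighborSet v).ncard) := by
    intro v
    have hcard : (H.incidenceSet v).ncard = (H.neighborSet v).ncard := by
      rw [← Nat.card_coe_set_eq, ← Nat.card_coe_set_eq]
      exact Nat.card_congr (H.incidenceSetEquivNeighborSet v)
    rw [← hcard, hinc v]
    exact hev v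
  have hHne : ∃ e, e ∈ H.edgeSet := by
    obtain ⟨e, he⟩ := hne
    exact ⟨e, hedge ▸ he⟩
  obtain ⟨u, c, hc⟩ := exists_cycle_of_even hHne hev'
  have hnodup : c.edges.Nodup := hc.isCircuit.isTrail.edges_nodup
  refine ⟨⟨{v | v ∈ c.support}, {e | e ∈ c.edges}, ?_, ?_⟩, ⟨?_, ?_⟩, ?_, ?_⟩
  · intro e he
    exact SimpleGraph.not_isDiag_of_mem_edgeSet H (c.edges_subset_edgeSet he)
  · intro e he x hx
    induction e with
    | h a b =>
      rcases Sym2.mem_iff.mp hx with rfl | rfl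
      · exact c.fst_mem_support_of_mem_edges he
      · exact c.snd_mem_support_of_mem_edges he
  -- connected
  · refine ⟨⟨u, c.start_mem_support⟩, ?_⟩
    intro x hx y hy
    have hr := walk_reflTransGen c {e | e ∈ c.edges} (fun e he => he)
    have hsymm : Symmetric (fun a b : V => s(a, b) ∈ ({e | e ∈ c.edges} : Set (Sym2 V))) := by
      intro a b hab
      rwa [Sym2.eq_swap] at hab
    have h1 : Relation.ReflTransGen _ u x := hr x hx
    have h2 : Relation.ReflTransGen _ u y := hr y hy
    exact Relation.ReflTransGen.trans ((@Relation.ReflTransGen.stdSymm _ _ ⟨fun a b h => hsymm h⟩).symm _ _ h1) h2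
  -- degree 2
  · intro v hv
    show ({e ∈ {e | e ∈ c.edges} | v ∈ e} : Set (Sym2 V)).ncard = 2
    have hset : {e ∈ {e | e ∈ c.edges} | v ∈ e}
        = ↑((c.edges.filter (fun e => v ∈ e)).toFinset : Finset (Sym2 V)) := by
      ext e
      simp [List.mem_filter]
    rw [hset, Set.ncard_coe_finset, List.toFinset_card_of_nodup (hnodup.filter _)]
    have := cycle_countP c hc hv
    rwa [List.countP_eq_length_filter] at this
  · intro e he
    exact hedge ▸ c.edges_subset_edgeSet he
  · have h3 := hc.three_le_length
    have : c.edges ≠ [] := by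
      intro h0
      have := c.length_edges
      rw [h0] at this
      simp at this
      omega
    obtain ⟨e, he⟩ := List.exists_mem_of_ne_nil _ this
    exact ⟨e, he⟩



section SetArith

variable {α : Type*} [Finite α]

lemma ncard_symmDiff_add (A B : Set α) :
    (symmDiff A B).ncard + 2 * (A ∩ B).ncard = A.ncard + B.ncard := by
  have h1 : symmDiff A B = (A \ B) ∪ (B \ A) := Set.symmDiff_def A B
  have h2 : (symmDiff A B).ncard = (A \ B).ncard + (B \ A).ncard := by
    rw [h1]
    exact Set.ncard_union_eq disjoint_sdiff_sdiff (Set.toFinite _) (Set.toFinite _)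
  have h3 : (A \ B).ncard + (A ∩ B).ncard = A.ncard := by
    have : A \ B = A \ (A ∩ B) := by rw [Set.diff_self_inter]
    rw [this]
    exact Set.ncard_diff_add_ncard_of_subset Set.inter_subset_left (Set.toFinite _)
  have h4 : (B \ A).ncard + (A ∩ B).ncard = B.ncard := by
    have : B \ A = B \ (A ∩ B) := by rw [Set.inter_comm, Set.diff_self_inter]
    rw [this, Set.inter_comm]
    exact Set.ncard_diff_add_ncard_of_subset Set.inter_subset_left (Set.toFinite _)
  omega

lemma odd_ncard_symmDiff (A B : Set α) (hB : Even B.ncard) :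
    Odd (symmDiff A B).ncard ↔ Odd A.ncard := by
  have h := ncard_symmDiff_add A B
  rw [Nat.even_iff] at hB
  rw [Nat.odd_iff, Nat.odd_iff]
  omega

lemma even_ncard_symmDiff (A B : Set α) (h : Odd A.ncard ↔ Odd B.ncard) :
    Even (symmDiff A B).ncard := by
  have he := ncard_symmDiff_add A B
  rw [Nat.odd_iff, Nat.odd_iff] at h
  rw [Nat.even_iff]
  omega

lemma sep_symmDiff (A B : Set α) (P : α → Prop) :
    {e ∈ symmDiff A B | P e} = symmDiff {e ∈ A | P e} {e ∈ B | P e} := by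
  ext e
  simp only [Set.mem_setOf_eq, Set.mem_symmDiff]
  tauto

end SetArith

section Joins

open FinGraph

variable {V : Type*} [Fintype V]

/-- Every circuit has even incidence count at every vertex. -/
lemma circuit_even_inc (C : FinGraph V) (hC : C.IsCircuitGraph) (v : V) :
    Even {e ∈ C.edges | v ∈ e}.ncard := by
  by_cases hv : v ∈ C.verts
  · have := hC.2 v hv
    rw [FinGraph.deg] at this
    rw [this]
    exact even_two
  · have : {e ∈ C.edges | v ∈ e} = ∅ := by
      ext e
      simp only [Set.mem_setOf_eq, Set.mem_empty_iff_false, iff_false, not_and]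
      intro he hve
      exact (hv (C.mem_verts e he v hve)).elim
    rw [this, Set.ncard_empty]
    exact Even.zero

/-- Symmetric difference of a join with an even edge set is a join. -/
lemma join_symmDiff (G : FinGraph V) (T : Set V) (F : Set (Sym2 V)) (hjoin : G.IsJoin T F)
    (E : Set (Sym2 V)) (hE : E ⊆ G.edges) (hEev : ∀ v, Even {e ∈ E | v ∈ e}.ncard) :
    G.IsJoin T (symmDiff F E) := by
  constructor
  · intro e he
    rw [Set.mem_symmDiff] at he
    rcases he with ⟨he, -⟩ | ⟨he, -⟩
    · exact hjoin.1 he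
    · exact hE he
  · intro v
    rw [sep_symmDiff F E (fun e => v ∈ e),
      odd_ncard_symmDiff _ _ (hEev v)]
    exact hjoin.2 v

lemma ncard_symmDiff_card (F E : Set (Sym2 V)) :
    ((symmDiff F E).ncard : ℤ) = (F.ncard : ℤ) + ((E \ F).ncard : ℤ) - ((E ∩ F).ncard : ℤ) := by
  have h1 : (symmDiff F E).ncard = (F \ E).ncard + (E \ F).ncard := by
    rw [Set.symmDiff_def]
    exact Set.ncard_union_eq disjoint_sdiff_sdiff (Set.toFinite _) (Set.toFinite _)
  have h2 : (F \ E).ncard + (F ∩ E).ncard = F.ncard := by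
    have : F \ E = F \ (F ∩ E) := by rw [Set.diff_self_inter]
    rw [this]
    exact Set.ncard_diff_add_ncard_of_subset Set.inter_subset_left (Set.toFinite _)
  have h3 : (E ∩ F).ncard = (F ∩ E).ncard := by rw [Set.inter_comm]
  omega

/-- ν(G,T) is at most the size of any join. -/
lemma nu_le_join (G : FinGraph V) (T : Set V) (F : Set (Sym2 V)) (hjoin : G.IsJoin T F) :
    G.nu T ≤ F.ncard :=
  Nat.sInf_le ⟨F, hjoin, rfl⟩

/-- Key induction: an even edge set of negative weight contains a negative circuit. -/
lemma neg_circuit_of_neg_even (G : FinGraph V) (F : Set (Sym2 V)) :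
    ∀ (n : ℕ) (D : Set (Sym2 V)), D.ncard ≤ n → D ⊆ G.edges →
      (∀ v, Even {e ∈ D | v ∈ e}.ncard) →
      ((D \ F).ncard : ℤ) - ((D ∩ F).ncard : ℤ) < 0 →
      ∃ C : FinGraph V, C.IsSubgraph G ∧ C.IsCircuitGraph ∧ FinGraph.wF F C < 0 := by
  classical
  intro n
  induction n with
  | zero =>
    intro D hcard _ _ hneg
    have : D = ∅ := ((Set.ncard_eq_zero (Set.toFinite _)).mp (Nat.le_zero.mp hcard))
    subst this
    simp at hneg
  | succ n ih =>
    intro D hcard hDG hev hneg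
    rcases D.eq_empty_or_nonempty with rfl | hne
    · simp at hneg
    obtain ⟨C, hCcirc, hCsub, hCne⟩ := exists_circuit D
      (fun e he => G.not_isDiag e (hDG he)) hne hev
    have hCG : C.IsSubgraph G := by
      constructor
      · intro v hv
        have hdeg := hCcirc.2 v hv
        rw [FinGraph.deg] at hdeg
        have hne2 : {e ∈ C.edges | v ∈ e}.Nonempty := by
          rw [← Set.ncard_pos (Set.toFinite _)] at *
          omega
        obtain ⟨e, he, hve⟩ := hne2
        exact G.mem_verts e (hDG (hCsub he)) v hve
      · exact fun e he => hDG (hCsub he)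
    by_cases hCneg : FinGraph.wF F C < 0
    · exact ⟨C, hCG, hCcirc, hCneg⟩
    push_neg at hCneg
    set D' := D \ C.edges with hD'
    -- cardinality decreases
    have hsplit : D'.ncard + C.edges.ncard = D.ncard :=
      Set.ncard_diff_add_ncard_of_subset hCsub (Set.toFinite _)
    have hCpos : 1 ≤ C.edges.ncard := by
      rw [Nat.one_le_iff_ne_zero]
      intro h0
      rw [Set.ncard_eq_zero (Set.toFinite _)] at h0
      exact Set.not_nonempty_empty (h0 ▸ hCne)
    have hcard' : D'.ncard ≤ n := by omega
    -- evenness preserved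
    have hev' : ∀ v, Even {e ∈ D' | v ∈ e}.ncard := by
      intro v
      have hsubinc : {e ∈ C.edges | v ∈ e} ⊆ {e ∈ D | v ∈ e} :=
        fun e ⟨he, hv⟩ => ⟨hCsub he, hv⟩
      have heq : {e ∈ D' | v ∈ e} = {e ∈ D | v ∈ e} \ {e ∈ C.edges | v ∈ e} := by
        ext e
        simp only [hD', Set.mem_setOf_eq, Set.mem_diff, not_and]
        constructor
        · rintro ⟨⟨he, hce⟩, hv⟩
          exact ⟨⟨he, hv⟩, fun hc _ => hce hc⟩
        · rintro ⟨⟨he, hv⟩, hnc⟩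
          exact ⟨⟨he, fun hc => hnc hc hv⟩, hv⟩
      have hd := Set.ncard_diff_add_ncard_of_subset hsubinc (Set.toFinite _)
      have h1 := hev v
      have h2 := circuit_even_inc C hCcirc v
      rw [heq]
      rw [Nat.even_iff] at h1 h2 ⊢
      omega
    -- weight splits
    have hdiffsplit : ((D \ F).ncard : ℤ) = ((C.edges \ F).ncard : ℤ) + ((D' \ F).ncard : ℤ) := by
      have : D \ F = (C.edges \ F) ∪ (D' \ F) := by
        ext e
        simp only [hD', Set.mem_diff, Set.mem_union]
        constructor
        · rintro ⟨he, hf⟩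
          by_cases hc : e ∈ C.edges
          · exact Or.inl ⟨hc, hf⟩
          · exact Or.inr ⟨⟨he, hc⟩, hf⟩
        · rintro (⟨hc, hf⟩ | ⟨⟨he, _⟩, hf⟩)
          · exact ⟨hCsub hc, hf⟩
          · exact ⟨he, hf⟩
      rw [this, Set.ncard_union_eq ?_ (Set.toFinite _) (Set.toFinite _)]
      · push_cast; ring
      · rw [Set.disjoint_left]
        rintro e ⟨hc, -⟩ ⟨⟨-, hnc⟩, -⟩
        exact hnc hc
    have hintsplit : ((D ∩ F).ncard : ℤ) = ((C.edges ∩ F).ncard : ℤ) + ((D' ∩ F).ncard : ℤ) := by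
      have : D ∩ F = (C.edges ∩ F) ∪ (D' ∩ F) := by
        ext e
        simp only [hD', Set.mem_inter_iff, Set.mem_union, Set.mem_diff]
        constructor
        · rintro ⟨he, hf⟩
          by_cases hc : e ∈ C.edges
          · exact Or.inl ⟨hc, hf⟩
          · exact Or.inr ⟨⟨he, hc⟩, hf⟩
        · rintro (⟨hc, hf⟩ | ⟨⟨he, -⟩, hf⟩)
          · exact ⟨hCsub hc, hf⟩
          · exact ⟨he, hf⟩
      rw [this, Set.ncard_union_eq ?_ (Set.toFinite _) (Set.toFinite _)]
      · push_cast; ring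
      · rw [Set.disjoint_left]
        rintro e ⟨hc, -⟩ ⟨⟨-, hnc⟩, -⟩
        exact hnc hc
    have hwC : FinGraph.wF F C = ((C.edges \ F).ncard : ℤ) - ((C.edges ∩ F).ncard : ℤ) := rfl
    have hneg' : ((D' \ F).ncard : ℤ) - ((D' ∩ F).ncard : ℤ) < 0 := by
      rw [hwC] at hCneg
      omega
    exact ih D' hcard' (fun e he => hDG he.1) hev' hneg'

end Joins

/-- Let `(G,T)` be a graft and `F` a join of `(G,T)`. Then `F` is
a minimum join of `(G,T)` iff there is no circuit `C` of `G` with `w_F(C) < 0`. -/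
theorem statement0 {V : Type*} [Fintype V] (G : FinGraph V) (T : Set V)
    (F : Set (Sym2 V)) (hgraft : G.IsGraft T) (hjoin : G.IsJoin T F) :
    G.IsMinJoin T F ↔
      ¬ ∃ C : FinGraph V, C.IsSubgraph G ∧ C.IsCircuitGraph ∧ FinGraph.wF F C < 0 := by
  classical
  constructor
  · rintro ⟨hjF, hcard⟩ ⟨C, hCsub, hCcirc, hCneg⟩
    -- symmetric difference with the negative circuit gives a smaller join
    have hjoin' : G.IsJoin T (symmDiff F C.edges) :=
      join_symmDiff G T F hjF C.edges hCsub.2 (circuit_even_inc C hCcirc)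
    have hcard' : ((symmDiff F C.edges).ncard : ℤ)
        = (F.ncard : ℤ) + ((C.edges \ F).ncard : ℤ) - ((C.edges ∩ F).ncard : ℤ) :=
      ncard_symmDiff_card F C.edges
    have hwC : FinGraph.wF F C = ((C.edges \ F).ncard : ℤ) - ((C.edges ∩ F).ncard : ℤ) := rfl
    have hlt : ((symmDiff F C.edges).ncard : ℤ) < (F.ncard : ℤ) := by
      rw [hwC] at hCneg
      omega
    have hle := nu_le_join G T _ hjoin'
    rw [← hcard] at hle
    have : (F.ncard : ℤ) ≤ ((symmDiff F C.edges).ncard : ℤ) := by exact_mod_cast hle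
    omega
  · intro hno
    refine ⟨hjoin, ?_⟩
    by_contra hne
    have hle : G.nu T ≤ F.ncard := nu_le_join G T F hjoin
    have hlt : G.nu T < F.ncard := lt_of_le_of_ne hle (fun h => hne h.symm)
    -- get a minimum join F'
    have hmem : G.nu T ∈ {n | ∃ F, G.IsJoin T F ∧ F.ncard = n} :=
      Nat.sInf_mem ⟨F.ncard, F, hjoin, rfl⟩
    obtain ⟨F', hjF', hF'card⟩ := hmem
    -- the symmetric difference has negative F-weight and even incidence everywhere
    set D := symmDiff F F' with hD
    have hDG : D ⊆ G.edges := by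
      intro e he
      rw [hD, Set.mem_symmDiff] at he
      rcases he with ⟨he, -⟩ | ⟨he, -⟩
      · exact hjoin.1 he
      · exact hjF'.1 he
    have hev : ∀ v, Even {e ∈ D | v ∈ e}.ncard := by
      intro v
      rw [hD, sep_symmDiff F F' (fun e => v ∈ e)]
      exact even_ncard_symmDiff _ _ (by rw [hjoin.2 v, hjF'.2 v])
    have hDF : D \ F = F' \ F := by
      ext e
      rw [hD, Set.mem_diff, Set.mem_symmDiff, Set.mem_diff]
      tauto
    have hDiF : D ∩ F = F \ F' := by
      ext e
      rw [hD, Set.mem_inter_iff, Set.mem_symmDiff, Set.mem_diff]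
      tauto
    have h1 : (F' \ F).ncard + (F' ∩ F).ncard = F'.ncard := by
      have : F' \ F = F' \ (F' ∩ F) := by rw [Set.diff_self_inter]
      rw [this]
      exact Set.ncard_diff_add_ncard_of_subset Set.inter_subset_left (Set.toFinite _)
    have h2 : (F \ F').ncard + (F ∩ F').ncard = F.ncard := by
      have : F \ F' = F \ (F ∩ F') := by rw [Set.diff_self_inter]
      rw [this]
      exact Set.ncard_diff_add_ncard_of_subset Set.inter_subset_left (Set.toFinite _)
    have h3 : (F' ∩ F).ncard = (F ∩ F').ncard := by rw [Set.inter_comm]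
    have hneg : ((D \ F).ncard : ℤ) - ((D ∩ F).ncard : ℤ) < 0 := by
      rw [hDF, hDiF]
      have : F'.ncard < F.ncard := by omega
      omega
    obtain ⟨C, hCsub, hCcirc, hCneg⟩ :=
      neg_circuit_of_neg_even G F D.ncard D le_rfl hDG hev hneg
    exact hno ⟨C, hCsub, hCcirc, hCneg⟩
end

section
/- Let G be a connected finite simple graph, let r ∈ V(G), and set T = V(G) ∖ {r}. Then G is factor-critical if and only if (G,T) is a graft satisfying ν(G,T) = ν(G, T Δ {r,v}) for every v ∈ V(G) ∖ {r}. -/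
/-!
Common definitions: finite simple graphs given as (vertex set, edge set) pairs,
grafts, joins, weights/distances, ears, bipartite grafts, combs, quasicombs,
critical grafts, effective ear grafts.
-/

/-- A finite simple graph on an ambient (finite) vertex type `V`:
a set of vertices and a set of (non-loop) edges between them. -/
structure SGraph (V : Type*) where
  verts : Set V
  edges : Set (Sym2 V)
  not_isDiag : ∀ e ∈ edges, ¬ e.IsDiag
  mem_verts : ∀ e ∈ edges, ∀ x ∈ e, x ∈ verts

namespace SGraph

variable {V : Type*}

/-- Adjacency. -/
def Adj (G : SGraph V) (u v : V) : Prop := s(u, v) ∈ G.edges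

/-- Degree of a vertex. -/
noncomputable def deg (G : SGraph V) (v : V) : ℕ := {e ∈ G.edges | v ∈ e}.ncard

/-- `G` is connected. -/
def Connected (G : SGraph V) : Prop :=
  G.verts.Nonempty ∧ ∀ u ∈ G.verts, ∀ v ∈ G.verts, Relation.ReflTransGen G.Adj u v

/-- `H` is a subgraph of `G`. -/
def IsSubgraph (H G : SGraph V) : Prop := H.verts ⊆ G.verts ∧ H.edges ⊆ G.edges

/-- `(G, T)` is a graft: every connected component of `G` contains an even
number of vertices of `T`. -/
def IsGraft (G : SGraph V) (T : Set V) : Prop :=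
  T ⊆ G.verts ∧ ∀ v ∈ G.verts, Even {u ∈ T | Relation.ReflTransGen G.Adj v u}.ncard

/-- `F` is a join of `(G, T)`: a vertex is incident to an odd number of edges
of `F` iff it lies in `T`. -/
def IsJoin (G : SGraph V) (T : Set V) (F : Set (Sym2 V)) : Prop :=
  F ⊆ G.edges ∧ ∀ v : V, (Odd {e ∈ F | v ∈ e}.ncard ↔ v ∈ T)

/-- `ν(G, T)`: the minimum cardinality of a join of `(G, T)`. -/
noncomputable def nu (G : SGraph V) (T : Set V) : ℕ :=
  sInf {n | ∃ F, G.IsJoin T F ∧ F.ncard = n}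

/-- `F` is a minimum join of `(G, T)`. -/
def IsMinJoin (G : SGraph V) (T : Set V) (F : Set (Sym2 V)) : Prop :=
  G.IsJoin T F ∧ F.ncard = G.nu T

/-- The `F`-weight of a (sub)graph `H`: `|E(H) ∖ F| − |E(H) ∩ F|`. -/
noncomputable def wF (F : Set (Sym2 V)) (H : SGraph V) : ℤ :=
  ((H.edges \ F).ncard : ℤ) - ((H.edges ∩ F).ncard : ℤ)

/-- `P` is a path (graph): connected, all degrees at most two, and some vertex
of degree less than two. -/
def IsPathGraph (P : SGraph V) : Prop :=
  P.Connected ∧ (∀ v ∈ P.verts, P.deg v ≤ 2) ∧ ∃ v ∈ P.verts, P.deg v < 2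

/-- `P` is a circuit: connected and every vertex has degree two. -/
def IsCircuitGraph (P : SGraph V) : Prop :=
  P.Connected ∧ ∀ v ∈ P.verts, P.deg v = 2

/-- `P` is a path with ends `x` and `y`. -/
def IsPathBetween (P : SGraph V) (x y : V) : Prop :=
  P.IsPathGraph ∧ x ∈ P.verts ∧ y ∈ P.verts ∧
    ∀ v ∈ P.verts, (P.deg v ≤ 1 ↔ v = x ∨ v = y)

/-- The `F`-distance between `u` and `v` in `G`: the minimum `F`-weight of a
path of `G` between `u` and `v`. -/
noncomputable def distF (G : SGraph V) (F : Set (Sym2 V)) (u v : V) : ℤ :=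
  sInf {w | ∃ P : SGraph V, P.IsSubgraph G ∧ P.IsPathBetween u v ∧ wF F P = w}

/-- A path `P` of `G` between `u` and `v` is `F`-shortest if it has minimum
`F`-weight among all such paths. -/
def IsShortestPath (G : SGraph V) (F : Set (Sym2 V)) (P : SGraph V) (u v : V) : Prop :=
  P.IsSubgraph G ∧ P.IsPathBetween u v ∧
    ∀ Q : SGraph V, Q.IsSubgraph G → Q.IsPathBetween u v → wF F P ≤ wF F Q

/-- The graph consisting of the single vertex `r`. -/
def single (r : V) : SGraph V where
  verts := {r}
  edges := ∅
  not_isDiag := by intro e he; exact absurd he (Set.notMem_empty e)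
  mem_verts := by intro e he; exact absurd he (Set.notMem_empty e)

/-- The sum `G + H` of two graphs. -/
def sum (G H : SGraph V) : SGraph V where
  verts := G.verts ∪ H.verts
  edges := G.edges ∪ H.edges
  not_isDiag := by
    rintro e (he | he)
    · exact G.not_isDiag e he
    · exact H.not_isDiag e he
  mem_verts := by
    rintro e (he | he) x hx
    · exact Or.inl (G.mem_verts e he x hx)
    · exact Or.inr (H.mem_verts e he x hx)

/-- `P` is a round ear relative to `X` with bonds `s` and `t`: either a path
whose ends `s ≠ t` are exactly its bonds, or a circuit sharing exactly the one
vertex `s = t` with `X`. -/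
def IsRoundEar (P : SGraph V) (X : Set V) (s t : V) : Prop :=
  P.edges.Nonempty ∧
    ((s ≠ t ∧ P.IsPathBetween s t ∧ P.verts ∩ X = {s, t}) ∨
      (s = t ∧ P.IsCircuitGraph ∧ P.verts ∩ X = {s}))

/-- `P` is a straight ear relative to `X` with bond `t`: a path exactly one of
whose ends, namely `t`, is a bond, and with no other bonds. -/
def IsStraightEar (P : SGraph V) (X : Set V) (t : V) : Prop :=
  P.edges.Nonempty ∧ (∃ v, v ≠ t ∧ P.IsPathBetween v t) ∧ P.verts ∩ X = {t}

/-- `P` is an ear relative to `X`. -/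
def IsEar (P : SGraph V) (X : Set V) : Prop :=
  (∃ s t, P.IsRoundEar X s t) ∨ ∃ t, P.IsStraightEar X t

/-- `(G, T; A, B)` is a bipartite graft with (ordered) color classes `A, B`. -/
def IsBipartiteGraft (G : SGraph V) (T A B : Set V) : Prop :=
  G.IsGraft T ∧ Disjoint A B ∧ A ∪ B = G.verts ∧
    ∀ e ∈ G.edges, ∃ a ∈ A, ∃ b ∈ B, e = s(a, b)

/-- A comb: a bipartite graft with `B ⊆ T` and `ν(G, T) = |B|`. -/
def IsComb (G : SGraph V) (T A B : Set V) : Prop :=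
  G.IsBipartiteGraft T A B ∧ B ⊆ T ∧ G.nu T = B.ncard

/-- A quasicomb: a bipartite graft with `ν(G, T) = |B ∩ T|`. -/
def IsQuasicomb (G : SGraph V) (T A B : Set V) : Prop :=
  G.IsBipartiteGraft T A B ∧ G.nu T = (B ∩ T).ncard

/-- A path `P` between `x` and `y` is `F`-balanced (w.r.t. the tooth set `Bt`)
if every vertex of `V(P) ∩ Bt ∖ {x, y}` is incident in `P` to exactly one edge
of `F`. -/
def IsBalancedPath (P : SGraph V) (Bt : Set V) (F : Set (Sym2 V)) (x y : V) : Prop :=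
  P.IsPathBetween x y ∧
    ∀ v ∈ (P.verts ∩ Bt) \ {x, y}, {e ∈ P.edges ∩ F | v ∈ e}.ncard = 1

/-- `M` is a perfect matching of the subgraph of `G` induced on `S`:
`M ⊆ E(G)`, all ends of edges of `M` lie in `S`, and every vertex of `S` is
incident to exactly one edge of `M`. -/
def IsPerfectMatchingOn (G : SGraph V) (S : Set V) (M : Set (Sym2 V)) : Prop :=
  M ⊆ G.edges ∧ (∀ e ∈ M, ∀ x ∈ e, x ∈ S) ∧ ∀ v ∈ S, {e ∈ M | v ∈ e}.ncard = 1

/-- `G` is factor-critical: for every vertex `v`, `G − v` has a perfect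
matching. -/
def FactorCritical (G : SGraph V) : Prop :=
  ∀ v ∈ G.verts, ∃ M, G.IsPerfectMatchingOn (G.verts \ {v}) M

/-- `(G, T)` is a factor-critical graft with root `r`: a connected graft with
`ν(G, T) = ν(G, T Δ {r, v})` for every vertex `v ≠ r`. -/
def FactorCriticalGraft (G : SGraph V) (T : Set V) (r : V) : Prop :=
  G.Connected ∧ G.IsGraft T ∧ r ∈ G.verts ∧
    ∀ v ∈ G.verts \ {r}, G.nu T = G.nu (symmDiff T {r, v})

/-- `(G, T; A, B)` is a critical bipartite graft (critical quasicomb) with root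
`r ∈ B`: connected, and `ν(G,T) − ν(G, T Δ {x,r})` is `1` for `x ∈ A` and `0`
for `x ∈ B`. -/
def IsCriticalBipGraft (G : SGraph V) (T A B : Set V) (r : V) : Prop :=
  G.IsBipartiteGraft T A B ∧ G.Connected ∧ r ∈ B ∧
    (∀ x ∈ A, (G.nu T : ℤ) - (G.nu (symmDiff T {x, r}) : ℤ) = 1) ∧
    (∀ x ∈ B, (G.nu T : ℤ) - (G.nu (symmDiff T {x, r}) : ℤ) = 0)

/-- `(P, T'; A', B')` is an ear graft relative to the bipartite graft
`(G, T; A, B)`. -/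
def IsEarGraft (G : SGraph V) (A B : Set V) (P : SGraph V) (T' A' B' : Set V) : Prop :=
  P.IsBipartiteGraft T' A' B' ∧ P.IsEar G.verts ∧ A ∩ B' = ∅ ∧ A' ∩ B = ∅

/-- `(P, T'; A', B')` is an effective ear graft relative to the bipartite graft
`(G, T; A, B)` with bonds `s` and `t` (with `s = t` both for circuit round ears
and for straight ears). Writing `T̂ = T Δ T'`, `Â = A ∪ A'`, `B̂ = B ∪ B'` for
the data of the sum graft:
(i) every vertex of `V(P) ∖ {s, t}` lying in `B̂` belongs to `T̂`;
(ii) no bond lying in `B̂` belongs to `T̂`;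
(iii) if `P` is a straight ear with bond `s` and other end `v`, then it is not
the case that `v ∈ Â ∧ v ∈ T̂` and not the case that `s ∈ Â ∧ s ∉ T̂`. -/
def IsEffectiveEarGraft (G : SGraph V) (T A B : Set V) (P : SGraph V)
    (T' A' B' : Set V) (s t : V) : Prop :=
  P.IsBipartiteGraft T' A' B' ∧ A ∩ B' = ∅ ∧ A' ∩ B = ∅ ∧
    (P.IsRoundEar G.verts s t ∨ (s = t ∧ P.IsStraightEar G.verts s)) ∧
    (∀ v ∈ (P.verts \ {s, t}) ∩ (B ∪ B'), v ∈ symmDiff T T') ∧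
    (s ∈ B ∪ B' → s ∉ symmDiff T T') ∧ (t ∈ B ∪ B' → t ∉ symmDiff T T') ∧
    (∀ v, P.IsStraightEar G.verts s → v ∈ P.verts → P.deg v ≤ 1 → v ≠ s →
      (¬(v ∈ A ∪ A' ∧ v ∈ symmDiff T T') ∧ ¬(s ∈ A ∪ A' ∧ s ∉ symmDiff T T')))

end SGraph

/-! ### Auxiliary development for `statement2` -/

namespace Stmt2Aux

open Set Classical

set_option linter.unusedSectionVars false
set_option linter.unusedVariables false

variable {V : Type*} [Fintype V]

/-- Degree of a vertex in an edge set. -/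
noncomputable def dd (F : Set (Sym2 V)) (z : V) : ℕ := {e ∈ F | z ∈ e}.ncard

/-- The set of vertices of odd degree. -/
def oV (F : Set (Sym2 V)) : Set V := {z | Odd (dd F z)}

lemma sep_symmDiff (F₁ F₂ : Set (Sym2 V)) (z : V) :
    {e ∈ symmDiff F₁ F₂ | z ∈ e} = symmDiff {e ∈ F₁ | z ∈ e} {e ∈ F₂ | z ∈ e} := by
  ext e
  simp only [Set.mem_symmDiff, Set.mem_setOf_eq]
  tauto

lemma cardSD (A B : Set (Sym2 V)) :
    (symmDiff A B).ncard + 2 * (A ∩ B).ncard = A.ncard + B.ncard := by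
  have h1 : symmDiff A B = (A ∪ B) \ (A ∩ B) := by
    ext e; simp only [Set.mem_symmDiff, Set.mem_diff, Set.mem_union, Set.mem_inter_iff]; tauto
  have h2 : (A ∩ B) ⊆ (A ∪ B) := fun x hx => Or.inl hx.1
  have h3 : ((A ∪ B) \ (A ∩ B)).ncard = (A ∪ B).ncard - (A ∩ B).ncard :=
    Set.ncard_diff h2 (Set.toFinite _)
  have h4 := Set.ncard_union_add_ncard_inter A B (Set.toFinite _) (Set.toFinite _)
  have h5 : (A ∩ B).ncard ≤ (A ∪ B).ncard := Set.ncard_le_ncard h2 (Set.toFinite _)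
  rw [h1, h3]
  omega

lemma odd_ncard_symmDiff (A B : Set (Sym2 V)) :
    Odd (symmDiff A B).ncard ↔ (Odd A.ncard ↔ ¬ Odd B.ncard) := by
  have h := cardSD A B
  rcases Nat.even_or_odd A.ncard with hA | hA <;>
    rcases Nat.even_or_odd B.ncard with hB | hB <;>
      simp only [Nat.even_iff, Nat.odd_iff] at * <;> constructor <;> intro hh <;> omega

lemma oV_symmDiff (F₁ F₂ : Set (Sym2 V)) :
    oV (symmDiff F₁ F₂) = symmDiff (oV F₁) (oV F₂) := by
  ext z
  have key : Odd (dd (symmDiff F₁ F₂) z) ↔ (Odd (dd F₁ z) ↔ ¬ Odd (dd F₂ z)) := by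
    rw [dd, sep_symmDiff]; exact odd_ncard_symmDiff _ _
  simp only [oV, Set.mem_setOf_eq, Set.mem_symmDiff]
  rw [key]
  tauto

lemma oV_empty : oV (∅ : Set (Sym2 V)) = ∅ := by
  ext z
  simp [oV, dd]

lemma dd_single_of_mem {e : Sym2 V} {z : V} (h : z ∈ e) : dd {e} z = 1 := by
  have : {x ∈ ({e} : Set (Sym2 V)) | z ∈ x} = {e} := by
    ext x
    constructor
    · rintro ⟨hx, -⟩; exact hx
    · intro hx
      rw [Set.mem_singleton_iff] at hx; subst hx; exact ⟨rfl, h⟩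
  rw [dd, this, Set.ncard_singleton]

lemma dd_single_of_not_mem {e : Sym2 V} {z : V} (h : z ∉ e) : dd {e} z = 0 := by
  have : {x ∈ ({e} : Set (Sym2 V)) | z ∈ x} = ∅ := by
    ext x
    constructor
    · rintro ⟨hx, hz⟩
      rw [Set.mem_singleton_iff] at hx; subst hx; exact absurd hz h
    · exact fun hx => hx.elim
  rw [dd, this, Set.ncard_empty]

lemma oV_single {a b : V} (hab : a ≠ b) :
    oV ({s(a, b)} : Set (Sym2 V)) = symmDiff {a} {b} := by
  ext z
  by_cases hza : z = a
  · subst hza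
    simp [oV, dd_single_of_mem (by simp : z ∈ s(z, b)), Set.mem_symmDiff, hab]
  · by_cases hzb : z = b
    · subst hzb
      simp [oV, dd_single_of_mem (by simp : z ∈ s(a, z)), Set.mem_symmDiff, hza, Ne.symm hab]
    · have : z ∉ s(a, b) := by
        simp only [Sym2.mem_iff]; tauto
      simp [oV, dd_single_of_not_mem this, Set.mem_symmDiff, hza, hzb]

lemma isJoin_iff (G : SGraph V) (S : Set V) (F : Set (Sym2 V)) :
    G.IsJoin S F ↔ F ⊆ G.edges ∧ oV F = S := by
  unfold SGraph.IsJoin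
  constructor
  · rintro ⟨h1, h2⟩
    refine ⟨h1, ?_⟩
    ext z; exact h2 z
  · rintro ⟨h1, h2⟩
    refine ⟨h1, fun z => ?_⟩
    rw [← h2]; rfl

lemma dd_pos_iff {F : Set (Sym2 V)} {z : V} : 1 ≤ dd F z ↔ ∃ e ∈ F, z ∈ e := by
  constructor
  · intro h
    obtain ⟨e, he⟩ := Set.nonempty_of_ncard_ne_zero (by omega : dd F z ≠ 0)
    exact ⟨e, he.1, he.2⟩
  · rintro ⟨e, he, hz⟩
    have : ({e} : Set (Sym2 V)) ⊆ {x ∈ F | z ∈ x} := by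
      rintro x rfl; exact ⟨he, hz⟩
    calc 1 = ({e} : Set (Sym2 V)).ncard := by simp
    _ ≤ dd F z := Set.ncard_le_ncard this (Set.toFinite _)

lemma dd_eq_zero_iff {F : Set (Sym2 V)} {z : V} : dd F z = 0 ↔ ∀ e ∈ F, z ∉ e := by
  rw [dd, Set.ncard_eq_zero (Set.toFinite _)]
  constructor
  · intro h e he hz
    have : e ∈ {x ∈ F | z ∈ x} := ⟨he, hz⟩
    simp [h] at this
  · intro h
    ext e; simp only [Set.mem_setOf_eq, Set.mem_empty_iff_false, iff_false, not_and]
    exact h e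

lemma mem_oV_iff {F : Set (Sym2 V)} {z : V} : z ∈ oV F ↔ Odd (dd F z) := Iff.rfl

lemma dd_mono {F₁ F₂ : Set (Sym2 V)} (h : F₁ ⊆ F₂) (z : V) : dd F₁ z ≤ dd F₂ z :=
  Set.ncard_le_ncard (fun e he => ⟨h he.1, he.2⟩) (Set.toFinite _)

lemma dd_split {Q D : Set (Sym2 V)} (h : Q ⊆ D) (z : V) :
    dd Q z + dd (D \ Q) z = dd D z := by
  rw [dd, dd, dd, ← Set.ncard_union_eq (by
    rw [Set.disjoint_left]; rintro e ⟨heQ, -⟩ ⟨⟨-, heQ'⟩, -⟩; exact heQ' heQ)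
    (Set.toFinite _) (Set.toFinite _)]
  congr 1
  ext e
  simp only [Set.mem_union, Set.mem_setOf_eq, Set.mem_diff]
  constructor
  · rintro (⟨h1, h2⟩ | ⟨⟨h1, h3⟩, h2⟩)
    · exact ⟨h h1, h2⟩
    · exact ⟨h1, h2⟩
  · rintro ⟨h1, h2⟩
    by_cases hq : e ∈ Q
    · exact Or.inl ⟨hq, h2⟩
    · exact Or.inr ⟨⟨h1, hq⟩, h2⟩

lemma sdiff_eq_symmDiff {Q D : Set (Sym2 V)} (h : Q ⊆ D) : D \ Q = symmDiff D Q := by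
  ext e
  simp only [Set.mem_diff, Set.mem_symmDiff]
  constructor
  · rintro ⟨h1, h2⟩; exact Or.inl ⟨h1, h2⟩
  · rintro (⟨h1, h2⟩ | ⟨h1, h2⟩)
    · exact ⟨h1, h2⟩
    · exact absurd (h h1) h2

lemma insert_eq_symmDiff {Q : Set (Sym2 V)} {e : Sym2 V} (h : e ∉ Q) :
    insert e Q = symmDiff Q {e} := by
  ext x
  simp only [Set.mem_insert_iff, Set.mem_symmDiff, Set.mem_singleton_iff]
  by_cases hx : x = e
  · subst hx; tauto
  · tauto

lemma ncard_diff_lt {Q D : Set (Sym2 V)} (hsub : Q ⊆ D) (hne : Q.Nonempty) :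
    (D \ Q).ncard < D.ncard := by
  have h1 : (D \ Q).ncard = D.ncard - Q.ncard := Set.ncard_diff hsub (Set.toFinite _)
  have h2 : 1 ≤ Q.ncard := by
    rw [Nat.one_le_iff_ne_zero]
    intro h
    rw [Set.ncard_eq_zero (Set.toFinite _)] at h
    exact hne.ne_empty h
  have h3 : Q.ncard ≤ D.ncard := Set.ncard_le_ncard hsub (Set.toFinite _)
  omega

/-- Pick an edge at a vertex of positive degree, in the form `s(a, c)` with `a ≠ c`. -/
lemma exists_edge_at {D : Set (Sym2 V)} (hdiag : ∀ e ∈ D, ¬ e.IsDiag) {a : V}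
    (h : 1 ≤ dd D a) : ∃ c, c ≠ a ∧ s(a, c) ∈ D := by
  obtain ⟨e, heD, hae⟩ := dd_pos_iff.mp h
  refine ⟨Sym2.Mem.other hae, ?_, ?_⟩
  · intro hc
    apply hdiag e heD
    rw [← Sym2.other_spec hae, hc]
    exact Sym2.mk_isDiag_iff.mpr rfl
  · rw [Sym2.other_spec hae]; exact heD

lemma dd_insert_not_mem {Q : Set (Sym2 V)} {e : Sym2 V} {z : V} (hz : z ∉ e) :
    dd (insert e Q) z = dd Q z := by
  rw [dd, dd]
  congr 1
  ext x
  simp only [Set.mem_setOf_eq, Set.mem_insert_iff]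
  constructor
  · rintro ⟨rfl | hx, hzx⟩
    · exact absurd hzx hz
    · exact ⟨hx, hzx⟩
  · rintro ⟨hx, hzx⟩; exact ⟨Or.inr hx, hzx⟩

lemma symmDiff_sd_aux {a b c : V} :
    symmDiff (symmDiff ({c} : Set V) {b}) (symmDiff {a} {c}) = symmDiff {a} {b} := by
  ext x
  simp only [Set.mem_symmDiff, Set.mem_singleton_iff]
  tauto

/-- Maximal trail peeling: from any vertex of positive degree one can peel off a
nonempty trail `Q` ending at a vertex `b` which is isolated in the rest. -/
lemma L1 : ∀ (n : ℕ) (D : Set (Sym2 V)), D.ncard ≤ n → (∀ e ∈ D, ¬ e.IsDiag) →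
    ∀ a : V, 1 ≤ dd D a → ∃ Q, Q ⊆ D ∧ Q.Nonempty ∧ ∃ b,
      oV Q = symmDiff {a} {b} ∧ dd (D \ Q) b = 0 := by
  intro n
  induction n with
  | zero =>
    intro D hn _ a ha
    rw [Nat.le_zero, Set.ncard_eq_zero (Set.toFinite _)] at hn
    subst hn
    simp [dd] at ha
  | succ n ih =>
    intro D hn hdiag a ha
    obtain ⟨c, hca, hcD⟩ := exists_edge_at hdiag ha
    set e : Sym2 V := s(a, c) with he
    have heD' : (D \ {e}).ncard ≤ n := by
      have := Set.ncard_diff_singleton_of_mem hcD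
      have h1 : 1 ≤ D.ncard := by
        rw [Nat.one_le_iff_ne_zero]
        intro h0
        rw [Set.ncard_eq_zero (Set.toFinite _)] at h0
        simp [h0] at hcD
      omega
    have hdiag' : ∀ x ∈ D \ {e}, ¬ x.IsDiag := fun x hx => hdiag x hx.1
    by_cases h0 : dd (D \ {e}) c = 0
    · refine ⟨{e}, by simpa using hcD, Set.singleton_nonempty _, c, ?_, ?_⟩
      · rw [he, oV_single (Ne.symm hca)]
      · exact h0
    · obtain ⟨Q', hQ'sub, hQ'ne, b', hoV', hdd'⟩ :=
        ih (D \ {e}) heD' hdiag' c (by omega)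
      have heQ' : e ∉ Q' := fun h => (hQ'sub h).2 rfl
      refine ⟨insert e Q', ?_, ⟨e, Set.mem_insert _ _⟩, b', ?_, ?_⟩
      · intro x hx
        rcases Set.mem_insert_iff.mp hx with rfl | hx
        · exact hcD
        · exact (hQ'sub hx).1
      · rw [insert_eq_symmDiff heQ', oV_symmDiff, hoV', he,
          oV_single (Ne.symm hca), symmDiff_sd_aux]
      · have : D \ insert e Q' = (D \ {e}) \ Q' := by
          ext x
          simp only [Set.mem_diff, Set.mem_insert_iff, Set.mem_singleton_iff]
          tauto
        rw [this]
        exact hdd'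

/-- Trail peeling with a stopping vertex `z`: peel a trail from `a` which either
stops the first time it reaches `z`, or never touches `z` and ends stuck at `b`. -/
lemma L3 : ∀ (n : ℕ) (D : Set (Sym2 V)), D.ncard ≤ n → (∀ e ∈ D, ¬ e.IsDiag) →
    ∀ a z : V, a ≠ z → 1 ≤ dd D a → ∃ Q, Q ⊆ D ∧ Q.Nonempty ∧ ∃ b,
      oV Q = symmDiff {a} {b} ∧
        ((b = z ∧ dd Q z = 1) ∨ (dd Q z = 0 ∧ dd (D \ Q) b = 0)) := by
  intro n
  induction n with
  | zero =>
    intro D hn _ a z _ ha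
    rw [Nat.le_zero, Set.ncard_eq_zero (Set.toFinite _)] at hn
    subst hn
    simp [dd] at ha
  | succ n ih =>
    intro D hn hdiag a z haz ha
    obtain ⟨c, hca, hcD⟩ := exists_edge_at hdiag ha
    set e : Sym2 V := s(a, c) with he
    have hsingle_sub : ({e} : Set (Sym2 V)) ⊆ D := by simpa using hcD
    have heD' : (D \ {e}).ncard ≤ n := by
      have := Set.ncard_diff_singleton_of_mem hcD
      have h1 : 1 ≤ D.ncard := by
        rw [Nat.one_le_iff_ne_zero]
        intro h0
        rw [Set.ncard_eq_zero (Set.toFinite _)] at h0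
        simp [h0] at hcD
      omega
    have hdiag' : ∀ x ∈ D \ {e}, ¬ x.IsDiag := fun x hx => hdiag x hx.1
    by_cases hcz : c = z
    · -- stop immediately: Q = {e}, b = z
      refine ⟨{e}, hsingle_sub, Set.singleton_nonempty _, z, ?_, Or.inl ⟨rfl, ?_⟩⟩
      · rw [he, oV_single (Ne.symm hca), hcz]
      · rw [← hcz]
        exact dd_single_of_mem (by rw [he]; simp)
    · by_cases h0 : dd (D \ {e}) c = 0
      · refine ⟨{e}, hsingle_sub, Set.singleton_nonempty _, c, ?_, Or.inr ⟨?_, h0⟩⟩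
        · rw [he, oV_single (Ne.symm hca)]
        · refine dd_single_of_not_mem ?_
          rw [he]
          simp only [Sym2.mem_iff]
          rintro (rfl | rfl)
          · exact haz rfl
          · exact hcz rfl
      · obtain ⟨Q', hQ'sub, hQ'ne, b', hoV', hrest⟩ :=
          ih (D \ {e}) heD' hdiag' c z hcz (by omega)
        have heQ' : e ∉ Q' := fun h => (hQ'sub h).2 rfl
        have hze : z ∉ e := by
          rw [he]
          simp only [Sym2.mem_iff]
          rintro (rfl | rfl)
          · exact haz rfl
          · exact hcz rfl
        have hsubD : insert e Q' ⊆ D := by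
          intro x hx
          rcases Set.mem_insert_iff.mp hx with rfl | hx
          · exact hcD
          · exact (hQ'sub hx).1
        have hoVQ : oV (insert e Q') = symmDiff {a} {b'} := by
          rw [insert_eq_symmDiff heQ', oV_symmDiff, hoV', he,
            oV_single (Ne.symm hca), symmDiff_sd_aux]
        have hdiffQ : D \ insert e Q' = (D \ {e}) \ Q' := by
          ext x
          simp only [Set.mem_diff, Set.mem_insert_iff, Set.mem_singleton_iff]
          tauto
        refine ⟨insert e Q', hsubD, ⟨e, Set.mem_insert _ _⟩, b', hoVQ, ?_⟩
        rcases hrest with ⟨hb', hdq⟩ | ⟨hdq, hstuck⟩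
        · exact Or.inl ⟨hb', by rw [dd_insert_not_mem hze]; exact hdq⟩
        · refine Or.inr ⟨by rw [dd_insert_not_mem hze]; exact hdq, ?_⟩
          rw [hdiffQ]
          exact hstuck

lemma symmDiff_sd_aux2 {r w b : V} :
    symmDiff (symmDiff ({r} : Set V) {w}) (symmDiff {r} {b}) = symmDiff {w} {b} := by
  ext x
  simp only [Set.mem_symmDiff, Set.mem_singleton_iff]
  tauto

lemma odd_pos {m : ℕ} (h : Odd m) : 1 ≤ m := by
  rcases h with ⟨j, hj⟩; omega

/-- If `D` has odd-degree set `{r, w}` and `w` has degree at least `3`, then `D`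
contains a nonempty "even" part using an edge at `w`. -/
lemma lemE : ∀ (n : ℕ) (D : Set (Sym2 V)), D.ncard ≤ n → (∀ e ∈ D, ¬ e.IsDiag) →
    ∀ r w : V, r ≠ w → oV D = symmDiff {r} {w} → 3 ≤ dd D w →
    ∃ C, C ⊆ D ∧ oV C = ∅ ∧ 1 ≤ dd C w := by
  intro n
  induction n with
  | zero =>
    intro D hn _ r w _ _ hw
    rw [Nat.le_zero, Set.ncard_eq_zero (Set.toFinite _)] at hn
    subst hn
    simp [dd] at hw
  | succ n ih =>
    intro D hn hdiag r w hrw hD hw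
    have hr1 : 1 ≤ dd D r := by
      refine odd_pos ?_
      have : r ∈ oV D := by
        rw [hD, Set.mem_symmDiff]
        exact Or.inl ⟨rfl, fun h => hrw h⟩
      exact this
    obtain ⟨Q, hQsub, hQne, b, hQoV, hcases⟩ := L3 (n + 1) D hn hdiag r w hrw hr1
    rcases hcases with ⟨hb, hdQw⟩ | ⟨hdQw, hstuck⟩
    · subst hb
      refine ⟨D \ Q, Set.diff_subset, ?_, ?_⟩
      · rw [sdiff_eq_symmDiff hQsub, oV_symmDiff, hD, hQoV, symmDiff_self,
          Set.bot_eq_empty]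
      · have := dd_split hQsub b
        omega
    · by_cases hbr : b = r
      · subst hbr
        have hQoV' : oV Q = ∅ := by rw [hQoV, symmDiff_self, Set.bot_eq_empty]
        have hn' : (D \ Q).ncard ≤ n := by
          have := ncard_diff_lt hQsub hQne
          omega
        have hdiag' : ∀ e ∈ D \ Q, ¬ e.IsDiag := fun e he => hdiag e he.1
        have hD' : oV (D \ Q) = symmDiff {b} {w} := by
          rw [sdiff_eq_symmDiff hQsub, oV_symmDiff, hD, hQoV', ← Set.bot_eq_empty, symmDiff_bot]
        have hw' : 3 ≤ dd (D \ Q) w := by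
          have := dd_split hQsub w
          omega
        obtain ⟨C, hCsub, hCoV, hCw⟩ := ih (D \ Q) hn' hdiag' b w hrw hD' hw'
        exact ⟨C, hCsub.trans Set.diff_subset, hCoV, hCw⟩
      · exfalso
        have hbw : b ≠ w := by
          rintro rfl
          have : b ∈ oV Q := by
            rw [hQoV, Set.mem_symmDiff]
            exact Or.inr ⟨rfl, fun h => hbr h⟩
          have hodd : Odd (dd Q b) := this
          rw [hdQw] at hodd
          simp at hodd
        have : b ∈ oV (D \ Q) := by
          rw [sdiff_eq_symmDiff hQsub, oV_symmDiff, hD, hQoV, symmDiff_sd_aux2,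
            Set.mem_symmDiff]
          exact Or.inr ⟨rfl, fun h => hbw h⟩
        have hodd : Odd (dd (D \ Q) b) := this
        rw [hstuck] at hodd
        simp at hodd

lemma filter_mem_card {e : Sym2 V} (h : ¬ e.IsDiag) :
    (Finset.univ.filter (fun z : V => z ∈ e)).card = 2 := by
  classical
  induction e using Sym2.ind with
  | _ x y =>
    have hxy : x ≠ y := fun hh => h (Sym2.mk_isDiag_iff.mpr hh)
    have heq : Finset.univ.filter (fun z : V => z ∈ s(x, y)) = {x, y} := by
      ext z
      simp [Sym2.mem_iff]
    rw [heq, Finset.card_pair hxy]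

lemma handshake (F : Set (Sym2 V)) (hdiag : ∀ e ∈ F, ¬ e.IsDiag) :
    ∑ z : V, dd F z = 2 * F.ncard := by
  classical
  have hFf : F.Finite := Set.toFinite F
  have hdd : ∀ z, dd F z = (hFf.toFinset.filter (fun e => z ∈ e)).card := by
    intro z
    rw [dd, ← Set.ncard_coe_finset]
    congr 1
    ext e
    simp [Set.Finite.mem_toFinset, Set.mem_setOf_eq]
  calc ∑ z : V, dd F z = ∑ z : V, ∑ e ∈ hFf.toFinset, if z ∈ e then 1 else 0 := by
        refine Finset.sum_congr rfl fun z _ => ?_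
        rw [hdd z, Finset.card_filter]
    _ = ∑ e ∈ hFf.toFinset, ∑ z : V, if z ∈ e then 1 else 0 := Finset.sum_comm
    _ = ∑ e ∈ hFf.toFinset, 2 := by
        refine Finset.sum_congr rfl fun e he => ?_
        rw [← Finset.card_filter]
        exact filter_mem_card (hdiag e (hFf.mem_toFinset.mp he))
    _ = 2 * F.ncard := by
        rw [Finset.sum_const, smul_eq_mul, Set.ncard_eq_toFinset_card F hFf, mul_comm]

lemma ncard_eq_sum (S : Set V) : S.ncard = ∑ z : V, if z ∈ S then 1 else 0 := by
  classical
  rw [← Finset.card_filter, ← Set.ncard_coe_finset]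
  congr 1
  ext z
  simp

lemma join_card_ge {G : SGraph V} {S : Set V} {F : Set (Sym2 V)} (hF : G.IsJoin S F) :
    S.ncard ≤ 2 * F.ncard := by
  have hdiag : ∀ e ∈ F, ¬ e.IsDiag := fun e he => G.not_isDiag e (hF.1 he)
  rw [← handshake F hdiag, ncard_eq_sum]
  refine Finset.sum_le_sum fun z _ => ?_
  by_cases hz : z ∈ S
  · have hodd : Odd (dd F z) := (hF.2 z).mpr hz
    have := odd_pos hodd
    simpa [hz] using this
  · simp [hz]

lemma pm_dd {G : SGraph V} {S : Set V} {M : Set (Sym2 V)}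
    (hM : G.IsPerfectMatchingOn S M) (z : V) : dd M z = if z ∈ S then 1 else 0 := by
  by_cases hz : z ∈ S
  · simp only [hz, if_true]
    exact hM.2.2 z hz
  · simp only [hz, if_false]
    rw [dd_eq_zero_iff]
    intro e he hze
    exact hz (hM.2.1 e he z hze)

lemma pm_card {G : SGraph V} {S : Set V} {M : Set (Sym2 V)}
    (hM : G.IsPerfectMatchingOn S M) : 2 * M.ncard = S.ncard := by
  have hdiag : ∀ e ∈ M, ¬ e.IsDiag := fun e he => G.not_isDiag e (hM.1 he)
  rw [← handshake M hdiag, ncard_eq_sum]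
  exact Finset.sum_congr rfl fun z _ => pm_dd hM z

lemma pm_isJoin {G : SGraph V} {S : Set V} {M : Set (Sym2 V)}
    (hM : G.IsPerfectMatchingOn S M) : G.IsJoin S M := by
  refine ⟨hM.1, fun z => ?_⟩
  show Odd (dd M z) ↔ z ∈ S
  rw [pm_dd hM z]
  by_cases hz : z ∈ S <;> simp [hz]

lemma exists_parity_walk (G : SGraph V) {a b : V} (h : Relation.ReflTransGen G.Adj a b) :
    ∃ W, W ⊆ G.edges ∧ oV W = symmDiff {a} {b} := by
  induction h with
  | refl =>
    exact ⟨∅, Set.empty_subset _, by rw [oV_empty, symmDiff_self, Set.bot_eq_empty]⟩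
  | @tail c d h1 h2 ih =>
    obtain ⟨W, hWsub, hWoV⟩ := ih
    have hcd : c ≠ d := by
      intro h
      exact G.not_isDiag _ h2 (by rw [h]; exact Sym2.mk_isDiag_iff.mpr rfl)
    refine ⟨symmDiff W {s(c, d)}, ?_, ?_⟩
    · intro x hx
      rcases Set.mem_symmDiff.mp hx with ⟨hx1, -⟩ | ⟨hx1, -⟩
      · exact hWsub hx1
      · rw [Set.mem_singleton_iff] at hx1
        subst hx1
        exact h2
    · rw [oV_symmDiff, hWoV, oV_single hcd]
      ext x
      simp only [Set.mem_symmDiff, Set.mem_singleton_iff]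
      tauto

lemma diff_pair_symmDiff {S : Set V} {a b : V} (ha : a ∈ S) (hb : b ∈ S) (hab : a ≠ b) :
    symmDiff (S \ {a, b}) (symmDiff {a} {b}) = S := by
  ext x
  by_cases hxa : x = a <;> by_cases hxb : x = b <;>
    simp only [Set.mem_symmDiff, Set.mem_diff, Set.mem_insert_iff,
      Set.mem_singleton_iff, hxa, hxb] <;> tauto

lemma exists_join_aux (G : SGraph V) (hG : G.Connected) :
    ∀ (n : ℕ) (S : Set V), S.ncard ≤ n → S ⊆ G.verts → Even S.ncard →
    ∃ F, F ⊆ G.edges ∧ oV F = S := by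
  intro n
  induction n with
  | zero =>
    intro S hn _ _
    rw [Nat.le_zero, Set.ncard_eq_zero (Set.toFinite _)] at hn
    subst hn
    exact ⟨∅, Set.empty_subset _, oV_empty⟩
  | succ n ih =>
    intro S hn hSsub hSeven
    by_cases hS : S = ∅
    · subst hS
      exact ⟨∅, Set.empty_subset _, oV_empty⟩
    · obtain ⟨a, ha⟩ := Set.nonempty_iff_ne_empty.mpr hS
      have hS1 : 1 ≤ S.ncard := by
        rw [Nat.one_le_iff_ne_zero]
        intro h
        exact hS ((Set.ncard_eq_zero (Set.toFinite _)).mp h)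
      have hS2 : 2 ≤ S.ncard := by
        rcases hSeven with ⟨j, hj⟩
        omega
      have hSma : (S \ {a}).ncard = S.ncard - 1 :=
        Set.ncard_diff_singleton_of_mem ha
      obtain ⟨b, hb⟩ := Set.nonempty_of_ncard_ne_zero
        (by omega : (S \ {a}).ncard ≠ 0)
      have hba : b ≠ a := fun h => hb.2 (by rw [h]; rfl)
      have hpair_sub : ({a, b} : Set V) ⊆ S := by
        rintro x (rfl | hx)
        · exact ha
        · rw [Set.mem_singleton_iff] at hx
          subst hx
          exact hb.1
      have hS' : (S \ {a, b}).ncard = S.ncard - 2 := by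
        rw [Set.ncard_diff hpair_sub (Set.toFinite _), Set.ncard_pair (Ne.symm hba)]
      obtain ⟨F', hF'sub, hF'oV⟩ := ih (S \ {a, b})
        (by omega)
        (fun x hx => hSsub hx.1)
        (by rcases hSeven with ⟨j, hj⟩; rw [hS']; exact ⟨j - 1, by omega⟩)
      obtain ⟨W, hWsub, hWoV⟩ := exists_parity_walk G (hG.2 a (hSsub ha) b (hSsub hb.1))
      refine ⟨symmDiff F' W, ?_, ?_⟩
      · intro x hx
        rcases Set.mem_symmDiff.mp hx with ⟨hx1, -⟩ | ⟨hx1, -⟩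
        · exact hF'sub hx1
        · exact hWsub hx1
      · rw [oV_symmDiff, hF'oV, hWoV, diff_pair_symmDiff ha hb.1 (Ne.symm hba)]

lemma nu_le {G : SGraph V} {S : Set V} {F : Set (Sym2 V)} (h : G.IsJoin S F) :
    G.nu S ≤ F.ncard :=
  Nat.sInf_le ⟨F, h, rfl⟩

lemma exists_min_join {G : SGraph V} {S : Set V} (h : ∃ F, G.IsJoin S F) :
    ∃ F, G.IsJoin S F ∧ F.ncard = G.nu S := by
  obtain ⟨F0, h0⟩ := h
  have hne : {n | ∃ F, G.IsJoin S F ∧ F.ncard = n}.Nonempty := ⟨F0.ncard, F0, h0, rfl⟩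
  obtain ⟨F, hF, hcard⟩ := Nat.sInf_mem hne
  exact ⟨F, hF, hcard⟩

lemma sd_pair {v w : V} (h : v ≠ w) : symmDiff ({v} : Set V) {w} = {v, w} := by
  ext x
  simp only [Set.mem_symmDiff, Set.mem_singleton_iff, Set.mem_insert_iff]
  constructor
  · rintro (⟨rfl, -⟩ | ⟨rfl, -⟩)
    · exact Or.inl rfl
    · exact Or.inr rfl
  · rintro (rfl | rfl)
    · exact Or.inl ⟨rfl, h⟩
    · exact Or.inr ⟨rfl, fun hh => h hh.symm⟩

lemma sd_removedPair {vs : Set V} {r u : V} (hr : r ∈ vs) (hu : u ∈ vs) (hur : u ≠ r) :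
    symmDiff (vs \ {r}) {r, u} = vs \ {u} := by
  ext x
  by_cases hxr : x = r <;> by_cases hxu : x = u <;>
    simp only [Set.mem_symmDiff, Set.mem_diff, Set.mem_insert_iff,
      Set.mem_singleton_iff, hxr, hxu] <;> first
  | (subst hxr; tauto)
  | (subst hxu; tauto)
  | tauto

lemma sd_diff_diff {vs : Set V} {v w : V} (hv : v ∈ vs) (hw : w ∈ vs) :
    symmDiff (vs \ {v}) (vs \ {w}) = symmDiff {v} {w} := by
  ext x
  by_cases hxv : x = v <;> by_cases hxw : x = w <;>
    simp only [Set.mem_symmDiff, Set.mem_diff, Set.mem_singleton_iff, hxv, hxw] <;> first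
  | (subst hxv; tauto)
  | (subst hxw; tauto)
  | tauto

/-- Under the constancy hypothesis, every minimum join of `verts \ {v}` isolates `v`. -/
lemma isolate {G : SGraph V} {k : ℕ}
    (hk : ∀ u ∈ G.verts, G.nu (G.verts \ {u}) = k)
    {v : V} (hv : v ∈ G.verts) {F : Set (Sym2 V)}
    (hF : G.IsJoin (G.verts \ {v}) F) (hmin : F.ncard = k) : dd F v = 0 := by
  by_contra h0
  have h1 : 1 ≤ dd F v := by omega
  have hFsub := hF.1
  have hFoV : oV F = G.verts \ {v} := ((isJoin_iff G _ F).mp hF).2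
  have hdiag : ∀ e ∈ F, ¬ e.IsDiag := fun e he => G.not_isDiag e (hFsub he)
  obtain ⟨Q, hQsub, hQne, b, hQoV, -⟩ := L1 F.ncard F le_rfl hdiag v h1
  have hFQsub : F \ Q ⊆ G.edges := fun e he => hFsub he.1
  have hcard : (F \ Q).ncard < k := by
    rw [← hmin]
    exact ncard_diff_lt hQsub hQne
  have hoVFQ : oV (F \ Q) = symmDiff (G.verts \ {v}) (symmDiff {v} {b}) := by
    rw [sdiff_eq_symmDiff hQsub, oV_symmDiff, hFoV, hQoV]
  by_cases hbv : b = v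
  · subst hbv
    have hthis : oV (F \ Q) = G.verts \ {b} := by
      rw [hoVFQ, symmDiff_self, symmDiff_bot]
    have hle := nu_le ((isJoin_iff G _ _).mpr ⟨hFQsub, hthis⟩)
    rw [hk b hv] at hle
    omega
  · have hb_oV : b ∈ oV Q := by
      rw [hQoV, Set.mem_symmDiff]
      exact Or.inr ⟨rfl, fun h => hbv h⟩
    have hb_verts : b ∈ G.verts := by
      obtain ⟨e, heQ, hbe⟩ := dd_pos_iff.mp (odd_pos hb_oV)
      exact G.mem_verts e (hFsub (hQsub heQ)) b hbe
    have hthis : oV (F \ Q) = G.verts \ {b} := by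
      rw [hoVFQ, sd_pair (fun h => hbv h.symm), sd_removedPair hv hb_verts hbv]
    have hle := nu_le ((isJoin_iff G _ _).mpr ⟨hFQsub, hthis⟩)
    rw [hk b hb_verts] at hle
    omega

lemma dd_def (F : Set (Sym2 V)) (z : V) : dd F z = {e ∈ F | z ∈ e}.ncard := rfl

lemma sdiff_symmDiff_cancel {C D : Set (Sym2 V)} (h : C ⊆ D) :
    symmDiff (D \ C) C = D := by
  ext x
  simp only [Set.mem_symmDiff, Set.mem_diff]
  constructor
  · rintro (⟨⟨h1, -⟩, -⟩ | ⟨h1, -⟩)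
    · exact h1
    · exact h h1
  · intro hx
    by_cases hc : x ∈ C
    · exact Or.inr ⟨hc, fun hh => hh.2 hc⟩
    · exact Or.inl ⟨⟨hx, hc⟩, hc⟩

/-- Main lemma: under the constancy hypothesis, any minimum join of
`verts \ {v}` is a perfect matching of `G - v`. -/
lemma min_join_is_matching {G : SGraph V} {k : ℕ} (hconn : G.Connected)
    (hk : ∀ u ∈ G.verts, G.nu (G.verts \ {u}) = k)
    (hex : ∀ u ∈ G.verts, ∃ F, G.IsJoin (G.verts \ {u}) F)
    {v : V} (hv : v ∈ G.verts) :
    ∃ M, G.IsPerfectMatchingOn (G.verts \ {v}) M := by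
  obtain ⟨F, hF, hFcard⟩ := exists_min_join (hex v hv)
  rw [hk v hv] at hFcard
  have hFsub := hF.1
  have hFoV : oV F = G.verts \ {v} := ((isJoin_iff G _ F).mp hF).2
  have hddv : dd F v = 0 := isolate hk hv hF hFcard
  have hdeg1 : ∀ w ∈ G.verts, w ≠ v → dd F w = 1 := by
    intro w hwv hwne
    have hodd : Odd (dd F w) := by
      have : w ∈ oV F := by
        rw [hFoV]
        exact ⟨hwv, hwne⟩
      exact this
    by_contra hne1
    have hw3 : 3 ≤ dd F w := by
      rcases hodd with ⟨j, hj⟩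
      omega
    obtain ⟨Fw, hFw, hFwcard⟩ := exists_min_join (hex w hwv)
    rw [hk w hwv] at hFwcard
    have hFwsub := hFw.1
    have hFwoV : oV Fw = G.verts \ {w} := ((isJoin_iff G _ Fw).mp hFw).2
    have hddw : dd Fw w = 0 := isolate hk hwv hFw hFwcard
    set D := symmDiff F Fw with hD
    have hDsub : D ⊆ G.edges := by
      intro x hx
      rcases Set.mem_symmDiff.mp hx with ⟨h1, -⟩ | ⟨h1, -⟩
      · exact hFsub h1
      · exact hFwsub h1
    have hdiagD : ∀ e ∈ D, ¬ e.IsDiag := fun e he => G.not_isDiag e (hDsub he)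
    have hDoV : oV D = symmDiff {v} {w} := by
      rw [hD, oV_symmDiff, hFoV, hFwoV, sd_diff_diff hv hwv]
    have hatw : {e ∈ D | w ∈ e} = {e ∈ F | w ∈ e} := by
      ext e
      simp only [Set.mem_setOf_eq]
      constructor
      · rintro ⟨he, hwe⟩
        rcases Set.mem_symmDiff.mp he with ⟨h1, -⟩ | ⟨h1, -⟩
        · exact ⟨h1, hwe⟩
        · exact absurd hwe (dd_eq_zero_iff.mp hddw e h1)
      · rintro ⟨heF, hwe⟩
        refine ⟨Set.mem_symmDiff.mpr (Or.inl ⟨heF, fun hc => ?_⟩), hwe⟩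
        exact (dd_eq_zero_iff.mp hddw e hc) hwe
    have hDw : 3 ≤ dd D w := by
      rw [dd_def, hatw, ← dd_def]
      exact hw3
    have hvw : v ≠ w := fun h => hwne h.symm
    obtain ⟨C, hCsub, hCoV, hCw⟩ := lemE D.ncard D le_rfl hdiagD v w hvw hDoV hDw
    set Q := D \ C with hQ
    have hQsub : Q ⊆ D := Set.diff_subset
    have hFQoV : oV (symmDiff F Q) = G.verts \ {w} := by
      rw [oV_symmDiff, hFoV, hQ, sdiff_eq_symmDiff hCsub, oV_symmDiff, hDoV, hCoV,
        ← Set.bot_eq_empty, symmDiff_bot, sd_pair hvw, sd_removedPair hv hwv hwne]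
    have hFQsub : symmDiff F Q ⊆ G.edges := by
      intro x hx
      rcases Set.mem_symmDiff.mp hx with ⟨h1, -⟩ | ⟨h1, -⟩
      · exact hFsub h1
      · exact hDsub (hQsub h1)
    have hFQjoin : G.IsJoin (G.verts \ {w}) (symmDiff F Q) :=
      (isJoin_iff G _ _).mpr ⟨hFQsub, hFQoV⟩
    have hFCoV : oV (symmDiff F C) = G.verts \ {v} := by
      rw [oV_symmDiff, hFoV, hCoV, ← Set.bot_eq_empty, symmDiff_bot]
    have hFCsub : symmDiff F C ⊆ G.edges := by
      intro x hx
      rcases Set.mem_symmDiff.mp hx with ⟨h1, -⟩ | ⟨h1, -⟩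
      · exact hFsub h1
      · exact hDsub (hCsub h1)
    have hFCjoin : G.IsJoin (G.verts \ {v}) (symmDiff F C) :=
      (isJoin_iff G _ _).mpr ⟨hFCsub, hFCoV⟩
    have h1 : symmDiff (symmDiff F Q) C = Fw := by
      rw [symmDiff_assoc, hQ, sdiff_symmDiff_cancel hCsub, hD]
      exact symmDiff_symmDiff_cancel_left F Fw
    have hint : (symmDiff F Q) ∩ C = F ∩ C := by
      ext e
      simp only [Set.mem_inter_iff]
      constructor
      · rintro ⟨he, heC⟩
        refine ⟨?_, heC⟩
        rcases Set.mem_symmDiff.mp he with ⟨hx, -⟩ | ⟨hx, -⟩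
        · exact hx
        · exact absurd heC hx.2
      · rintro ⟨heF, heC⟩
        exact ⟨Set.mem_symmDiff.mpr (Or.inl ⟨heF, fun hh => hh.2 heC⟩), heC⟩
    have h2 := cardSD (symmDiff F Q) C
    rw [h1, hint] at h2
    have h3 := cardSD F C
    have hge : k ≤ (symmDiff F C).ncard := by
      rw [← hk v hv]
      exact nu_le hFCjoin
    have hgew : k ≤ (symmDiff F Q).ncard := by
      rw [← hk w hwv]
      exact nu_le hFQjoin
    have heqk : (symmDiff F Q).ncard = k := by omega
    have hisol := isolate hk hwv hFQjoin heqk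
    obtain ⟨e0, he0C, hwe0⟩ := dd_pos_iff.mp hCw
    have he0D : e0 ∈ D := hCsub he0C
    have he0F : e0 ∈ F := by
      have : e0 ∈ {e ∈ F | w ∈ e} := by
        rw [← hatw]
        exact ⟨he0D, hwe0⟩
      exact this.1
    have he0Q : e0 ∉ Q := fun h => h.2 he0C
    have : 1 ≤ dd (symmDiff F Q) w :=
      dd_pos_iff.mpr ⟨e0, Set.mem_symmDiff.mpr (Or.inl ⟨he0F, he0Q⟩), hwe0⟩
    omega
  refine ⟨F, hFsub, ?_, ?_⟩
  · intro e he x hxe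
    have hxverts : x ∈ G.verts := G.mem_verts e (hFsub he) x hxe
    refine ⟨hxverts, fun hxv => ?_⟩
    rw [Set.mem_singleton_iff] at hxv
    subst hxv
    have : 1 ≤ dd F x := dd_pos_iff.mpr ⟨e, he, hxe⟩
    omega
  · intro z hz
    exact hdeg1 z hz.1 hz.2

end Stmt2Aux

/-- Let `G` be a connected finite simple graph, `r ∈ V(G)`, and
`T = V(G) ∖ {r}`. Then `G` is factor-critical iff `(G,T)` is a graft satisfying
`ν(G,T) = ν(G, T Δ {r,v})` for every `v ∈ V(G) ∖ {r}`. -/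
theorem statement2 {V : Type*} [Fintype V] (G : SGraph V)
    (hconn : G.Connected) (r : V) (hr : r ∈ G.verts) :
    G.FactorCritical ↔
      (G.IsGraft (G.verts \ {r}) ∧
        ∀ v ∈ G.verts \ {r},
          G.nu (G.verts \ {r}) = G.nu (symmDiff (G.verts \ {r}) {r, v})) := by
  classical
  open Stmt2Aux in
  constructor
  · intro hFC
    obtain ⟨Mr, hMr⟩ := hFC r hr
    have hEvenT : Even (G.verts \ {r}).ncard := by
      have h2 := pm_card hMr
      exact ⟨Mr.ncard, by omega⟩
    refine ⟨⟨Set.diff_subset, fun v hv => ?_⟩, fun v hv => ?_⟩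
    · have hreach_eq :
          {u ∈ G.verts \ {r} | Relation.ReflTransGen G.Adj v u} = G.verts \ {r} := by
        ext u
        constructor
        · rintro ⟨hu, -⟩
          exact hu
        · intro hu
          exact ⟨hu, hconn.2 v hv u hu.1⟩
      rw [hreach_eq]
      exact hEvenT
    · have hv' : v ∈ G.verts := hv.1
      have hvr : v ≠ r := hv.2
      rw [sd_removedPair hr hv' hvr]
      obtain ⟨Mv, hMv⟩ := hFC v hv'
      have h2r := pm_card hMr
      have h2v := pm_card hMv
      have hcard_eq : (G.verts \ {r}).ncard = (G.verts \ {v}).ncard := by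
        rw [Set.ncard_diff_singleton_of_mem hr,
          Set.ncard_diff_singleton_of_mem hv']
      have hnu : ∀ (u : V) (M : Set (Sym2 V)),
          G.IsPerfectMatchingOn (G.verts \ {u}) M →
          G.nu (G.verts \ {u}) = M.ncard := by
        intro u M hM
        refine le_antisymm (nu_le (pm_isJoin hM)) ?_
        refine le_csInf ⟨M.ncard, M, pm_isJoin hM, rfl⟩ ?_
        rintro n ⟨F, hF, rfl⟩
        have hge := join_card_ge hF
        have hpc := pm_card hM
        omega
      rw [hnu r Mr hMr, hnu v Mv hMv]
      omega
  · rintro ⟨hgraft, heq⟩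
    intro v hv
    have hreach_eq :
        {u ∈ G.verts \ {r} | Relation.ReflTransGen G.Adj r u} = G.verts \ {r} := by
      ext u
      constructor
      · rintro ⟨hu, -⟩
        exact hu
      · intro hu
        exact ⟨hu, hconn.2 r hr u hu.1⟩
    have hEvenT : Even (G.verts \ {r}).ncard := by
      have h := hgraft.2 r hr
      rwa [hreach_eq] at h
    have hk : ∀ u ∈ G.verts, G.nu (G.verts \ {u}) = G.nu (G.verts \ {r}) := by
      intro u hu
      by_cases hur : u = r
      · subst hur; rfl
      · have h := heq u ⟨hu, hur⟩
        rw [sd_removedPair hr hu hur] at h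
        exact h.symm
    have hex : ∀ u ∈ G.verts, ∃ F, G.IsJoin (G.verts \ {u}) F := by
      intro u hu
      have hEvenU : Even (G.verts \ {u}).ncard := by
        rwa [Set.ncard_diff_singleton_of_mem hu,
          ← Set.ncard_diff_singleton_of_mem hr]
      obtain ⟨F, hsub, hoV⟩ := exists_join_aux G hconn (G.verts \ {u}).ncard
        (G.verts \ {u}) le_rfl Set.diff_subset hEvenU
      exact ⟨F, (isJoin_iff G _ F).mpr ⟨hsub, hoV⟩⟩
    exact min_join_is_matching hconn hk hex hv
end

section
/- Let (G,T) be a factor-critical graft with root r, and let F be a minimum join of (G,T). Then every vertex v ∈ V(G) ∖ {r} is incident to exactly one edge of F, and r is incident to no edge of F. -/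
/-!
Common definitions: finite simple graphs given as (vertex set, edge set) pairs,
grafts, joins, weights/distances, ears, bipartite grafts, combs, quasicombs,
critical grafts, effective ear grafts.
-/

/-- A finite simple graph on an ambient (finite) vertex type `V`:
a set of vertices and a set of (non-loop) edges between them. -/
structure GraftGraph (V : Type*) where
  verts : Set V
  edges : Set (Sym2 V)
  not_isDiag : ∀ e ∈ edges, ¬ e.IsDiag
  mem_verts : ∀ e ∈ edges, ∀ x ∈ e, x ∈ verts

namespace GraftGraph

variable {V : Type*}

/-- Adjacency. -/
def Adj (G : GraftGraph V) (u v : V) : Prop := s(u, v) ∈ G.edges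

/-- Degree of a vertex. -/
noncomputable def deg (G : GraftGraph V) (v : V) : ℕ := {e ∈ G.edges | v ∈ e}.ncard

/-- `G` is connected. -/
def Connected (G : GraftGraph V) : Prop :=
  G.verts.Nonempty ∧ ∀ u ∈ G.verts, ∀ v ∈ G.verts, Relation.ReflTransGen G.Adj u v

/-- `H` is a subgraph of `G`. -/
def IsSubgraph (H G : GraftGraph V) : Prop := H.verts ⊆ G.verts ∧ H.edges ⊆ G.edges

/-- `(G, T)` is a graft: every connected component of `G` contains an even
number of vertices of `T`. -/
def IsGraft (G : GraftGraph V) (T : Set V) : Prop :=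
  T ⊆ G.verts ∧ ∀ v ∈ G.verts, Even {u ∈ T | Relation.ReflTransGen G.Adj v u}.ncard

/-- `F` is a join of `(G, T)`: a vertex is incident to an odd number of edges
of `F` iff it lies in `T`. -/
def IsJoin (G : GraftGraph V) (T : Set V) (F : Set (Sym2 V)) : Prop :=
  F ⊆ G.edges ∧ ∀ v : V, (Odd {e ∈ F | v ∈ e}.ncard ↔ v ∈ T)

/-- `ν(G, T)`: the minimum cardinality of a join of `(G, T)`. -/
noncomputable def nu (G : GraftGraph V) (T : Set V) : ℕ :=
  sInf {n | ∃ F, G.IsJoin T F ∧ F.ncard = n}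

/-- `F` is a minimum join of `(G, T)`. -/
def IsMinJoin (G : GraftGraph V) (T : Set V) (F : Set (Sym2 V)) : Prop :=
  G.IsJoin T F ∧ F.ncard = G.nu T

/-- The `F`-weight of a (sub)graph `H`: `|E(H) ∖ F| − |E(H) ∩ F|`. -/
noncomputable def wF (F : Set (Sym2 V)) (H : GraftGraph V) : ℤ :=
  ((H.edges \ F).ncard : ℤ) - ((H.edges ∩ F).ncard : ℤ)

/-- `P` is a path (graph): connected, all degrees at most two, and some vertex
of degree less than two. -/
def IsPathGraph (P : GraftGraph V) : Prop :=
  P.Connected ∧ (∀ v ∈ P.verts, P.deg v ≤ 2) ∧ ∃ v ∈ P.verts, P.deg v < 2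

/-- `P` is a circuit: connected and every vertex has degree two. -/
def IsCircuitGraph (P : GraftGraph V) : Prop :=
  P.Connected ∧ ∀ v ∈ P.verts, P.deg v = 2

/-- `P` is a path with ends `x` and `y`. -/
def IsPathBetween (P : GraftGraph V) (x y : V) : Prop :=
  P.IsPathGraph ∧ x ∈ P.verts ∧ y ∈ P.verts ∧
    ∀ v ∈ P.verts, (P.deg v ≤ 1 ↔ v = x ∨ v = y)

/-- The `F`-distance between `u` and `v` in `G`: the minimum `F`-weight of a
path of `G` between `u` and `v`. -/
noncomputable def distF (G : GraftGraph V) (F : Set (Sym2 V)) (u v : V) : ℤ :=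
  sInf {w | ∃ P : GraftGraph V, P.IsSubgraph G ∧ P.IsPathBetween u v ∧ wF F P = w}

/-- A path `P` of `G` between `u` and `v` is `F`-shortest if it has minimum
`F`-weight among all such paths. -/
def IsShortestPath (G : GraftGraph V) (F : Set (Sym2 V)) (P : GraftGraph V) (u v : V) : Prop :=
  P.IsSubgraph G ∧ P.IsPathBetween u v ∧
    ∀ Q : GraftGraph V, Q.IsSubgraph G → Q.IsPathBetween u v → wF F P ≤ wF F Q

/-- The graph consisting of the single vertex `r`. -/
def single (r : V) : GraftGraph V where
  verts := {r}
  edges := ∅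
  not_isDiag := by intro e he; exact absurd he (Set.notMem_empty e)
  mem_verts := by intro e he; exact absurd he (Set.notMem_empty e)

/-- The sum `G + H` of two graphs. -/
def sum (G H : GraftGraph V) : GraftGraph V where
  verts := G.verts ∪ H.verts
  edges := G.edges ∪ H.edges
  not_isDiag := by
    rintro e (he | he)
    · exact G.not_isDiag e he
    · exact H.not_isDiag e he
  mem_verts := by
    rintro e (he | he) x hx
    · exact Or.inl (G.mem_verts e he x hx)
    · exact Or.inr (H.mem_verts e he x hx)

/-- `P` is a round ear relative to `X` with bonds `s` and `t`: either a path
whose ends `s ≠ t` are exactly its bonds, or a circuit sharing exactly the one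
vertex `s = t` with `X`. -/
def IsRoundEar (P : GraftGraph V) (X : Set V) (s t : V) : Prop :=
  P.edges.Nonempty ∧
    ((s ≠ t ∧ P.IsPathBetween s t ∧ P.verts ∩ X = {s, t}) ∨
      (s = t ∧ P.IsCircuitGraph ∧ P.verts ∩ X = {s}))

/-- `P` is a straight ear relative to `X` with bond `t`: a path exactly one of
whose ends, namely `t`, is a bond, and with no other bonds. -/
def IsStraightEar (P : GraftGraph V) (X : Set V) (t : V) : Prop :=
  P.edges.Nonempty ∧ (∃ v, v ≠ t ∧ P.IsPathBetween v t) ∧ P.verts ∩ X = {t}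

/-- `P` is an ear relative to `X`. -/
def IsEar (P : GraftGraph V) (X : Set V) : Prop :=
  (∃ s t, P.IsRoundEar X s t) ∨ ∃ t, P.IsStraightEar X t

/-- `(G, T; A, B)` is a bipartite graft with (ordered) color classes `A, B`. -/
def IsBipartiteGraft (G : GraftGraph V) (T A B : Set V) : Prop :=
  G.IsGraft T ∧ Disjoint A B ∧ A ∪ B = G.verts ∧
    ∀ e ∈ G.edges, ∃ a ∈ A, ∃ b ∈ B, e = s(a, b)

/-- A comb: a bipartite graft with `B ⊆ T` and `ν(G, T) = |B|`. -/
def IsComb (G : GraftGraph V) (T A B : Set V) : Prop :=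
  G.IsBipartiteGraft T A B ∧ B ⊆ T ∧ G.nu T = B.ncard

/-- A quasicomb: a bipartite graft with `ν(G, T) = |B ∩ T|`. -/
def IsQuasicomb (G : GraftGraph V) (T A B : Set V) : Prop :=
  G.IsBipartiteGraft T A B ∧ G.nu T = (B ∩ T).ncard

/-- A path `P` between `x` and `y` is `F`-balanced (w.r.t. the tooth set `Bt`)
if every vertex of `V(P) ∩ Bt ∖ {x, y}` is incident in `P` to exactly one edge
of `F`. -/
def IsBalancedPath (P : GraftGraph V) (Bt : Set V) (F : Set (Sym2 V)) (x y : V) : Prop :=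
  P.IsPathBetween x y ∧
    ∀ v ∈ (P.verts ∩ Bt) \ {x, y}, {e ∈ P.edges ∩ F | v ∈ e}.ncard = 1

/-- `M` is a perfect matching of the subgraph of `G` induced on `S`:
`M ⊆ E(G)`, all ends of edges of `M` lie in `S`, and every vertex of `S` is
incident to exactly one edge of `M`. -/
def IsPerfectMatchingOn (G : GraftGraph V) (S : Set V) (M : Set (Sym2 V)) : Prop :=
  M ⊆ G.edges ∧ (∀ e ∈ M, ∀ x ∈ e, x ∈ S) ∧ ∀ v ∈ S, {e ∈ M | v ∈ e}.ncard = 1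

/-- `G` is factor-critical: for every vertex `v`, `G − v` has a perfect
matching. -/
def FactorCritical (G : GraftGraph V) : Prop :=
  ∀ v ∈ G.verts, ∃ M, G.IsPerfectMatchingOn (G.verts \ {v}) M

/-- `(G, T)` is a factor-critical graft with root `r`: a connected graft with
`ν(G, T) = ν(G, T Δ {r, v})` for every vertex `v ≠ r`. -/
def FactorCriticalGraft (G : GraftGraph V) (T : Set V) (r : V) : Prop :=
  G.Connected ∧ G.IsGraft T ∧ r ∈ G.verts ∧
    ∀ v ∈ G.verts \ {r}, G.nu T = G.nu (symmDiff T {r, v})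

/-- `(G, T; A, B)` is a critical bipartite graft (critical quasicomb) with root
`r ∈ B`: connected, and `ν(G,T) − ν(G, T Δ {x,r})` is `1` for `x ∈ A` and `0`
for `x ∈ B`. -/
def IsCriticalBipGraft (G : GraftGraph V) (T A B : Set V) (r : V) : Prop :=
  G.IsBipartiteGraft T A B ∧ G.Connected ∧ r ∈ B ∧
    (∀ x ∈ A, (G.nu T : ℤ) - (G.nu (symmDiff T {x, r}) : ℤ) = 1) ∧
    (∀ x ∈ B, (G.nu T : ℤ) - (G.nu (symmDiff T {x, r}) : ℤ) = 0)

/-- `(P, T'; A', B')` is an ear graft relative to the bipartite graft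
`(G, T; A, B)`. -/
def IsEarGraft (G : GraftGraph V) (A B : Set V) (P : GraftGraph V) (T' A' B' : Set V) : Prop :=
  P.IsBipartiteGraft T' A' B' ∧ P.IsEar G.verts ∧ A ∩ B' = ∅ ∧ A' ∩ B = ∅

/-- `(P, T'; A', B')` is an effective ear graft relative to the bipartite graft
`(G, T; A, B)` with bonds `s` and `t` (with `s = t` both for circuit round ears
and for straight ears). Writing `T̂ = T Δ T'`, `Â = A ∪ A'`, `B̂ = B ∪ B'` for
the data of the sum graft:
(i) every vertex of `V(P) ∖ {s, t}` lying in `B̂` belongs to `T̂`;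
(ii) no bond lying in `B̂` belongs to `T̂`;
(iii) if `P` is a straight ear with bond `s` and other end `v`, then it is not
the case that `v ∈ Â ∧ v ∈ T̂` and not the case that `s ∈ Â ∧ s ∉ T̂`. -/
def IsEffectiveEarGraft (G : GraftGraph V) (T A B : Set V) (P : GraftGraph V)
    (T' A' B' : Set V) (s t : V) : Prop :=
  P.IsBipartiteGraft T' A' B' ∧ A ∩ B' = ∅ ∧ A' ∩ B = ∅ ∧
    (P.IsRoundEar G.verts s t ∨ (s = t ∧ P.IsStraightEar G.verts s)) ∧
    (∀ v ∈ (P.verts \ {s, t}) ∩ (B ∪ B'), v ∈ symmDiff T T') ∧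
    (s ∈ B ∪ B' → s ∉ symmDiff T T') ∧ (t ∈ B ∪ B' → t ∉ symmDiff T T') ∧
    (∀ v, P.IsStraightEar G.verts s → v ∈ P.verts → P.deg v ≤ 1 → v ≠ s →
      (¬(v ∈ A ∪ A' ∧ v ∈ symmDiff T T') ∧ ¬(s ∈ A ∪ A' ∧ s ∉ symmDiff T T')))

end GraftGraph


open Set
open scoped Classical

namespace S4aux

variable {V : Type*} [Fintype V]

noncomputable def dd (S : Set (Sym2 V)) (x : V) : ℕ := {e ∈ S | x ∈ e}.ncard

lemma dd_congr {A B : Set (Sym2 V)} (h : A = B) (x : V) : dd A x = dd B x := by rw [h]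

lemma dd_union {A B : Set (Sym2 V)} (h : Disjoint A B) (x : V) :
    dd (A ∪ B) x = dd A x + dd B x := by
  unfold dd
  have hs : {e ∈ A ∪ B | x ∈ e} = {e ∈ A | x ∈ e} ∪ {e ∈ B | x ∈ e} := by
    ext e; simp only [Set.mem_setOf_eq, Set.mem_union]; tauto
  rw [hs]
  exact Set.ncard_union_eq (h.mono (Set.sep_subset _ _) (Set.sep_subset _ _))
    (Set.toFinite _) (Set.toFinite _)

lemma disjoint_diff_inter (A B : Set (Sym2 V)) : Disjoint (A \ B) (A ∩ B) := by
  rw [Set.disjoint_left]; intro e he hi; exact he.2 hi.2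

lemma dd_diff_add_inter (A B : Set (Sym2 V)) (x : V) :
    dd (A \ B) x + dd (A ∩ B) x = dd A x := by
  rw [← dd_union (disjoint_diff_inter A B) x, Set.diff_union_inter]

lemma symmDiff_eq_union (A B : Set (Sym2 V)) : symmDiff A B = (A \ B) ∪ (B \ A) := by
  rw [Set.symmDiff_def]

lemma disjoint_diffs (A B : Set (Sym2 V)) : Disjoint (A \ B) (B \ A) := by
  rw [Set.disjoint_left]; intro e he hb; exact he.2 hb.1

lemma dd_symmDiff (A B : Set (Sym2 V)) (x : V) :
    dd (symmDiff A B) x = dd (A \ B) x + dd (B \ A) x := by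
  rw [symmDiff_eq_union, dd_union (disjoint_diffs A B)]

lemma odd_dd_symmDiff (A B : Set (Sym2 V)) (x : V) :
    Odd (dd (symmDiff A B) x) ↔ (Odd (dd A x) ↔ ¬ Odd (dd B x)) := by
  have h1 := dd_diff_add_inter A B x
  have h2 := dd_diff_add_inter B A x
  have h3 : dd (B ∩ A) x = dd (A ∩ B) x := dd_congr (Set.inter_comm B A) x
  have h4 := dd_symmDiff A B x
  rw [h3] at h2
  simp only [Nat.odd_iff] at h1 h2 h4 ⊢
  omega

lemma ncard_diff_add_inter (A B : Set (Sym2 V)) :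
    (A \ B).ncard + (A ∩ B).ncard = A.ncard := by
  rw [← Set.ncard_union_eq (disjoint_diff_inter A B) (Set.toFinite _) (Set.toFinite _),
    Set.diff_union_inter]

lemma ncard_symmDiff (A B : Set (Sym2 V)) :
    (symmDiff A B).ncard = (A \ B).ncard + (B \ A).ncard := by
  rw [symmDiff_eq_union, Set.ncard_union_eq (disjoint_diffs A B) (Set.toFinite _) (Set.toFinite _)]

lemma dd_singleton (e : Sym2 V) (x : V) : dd {e} x = if x ∈ e then 1 else 0 := by
  unfold dd
  split_ifs with h
  · rw [show {e' ∈ ({e} : Set (Sym2 V)) | x ∈ e'} = {e} by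
      ext e'; simp only [Set.mem_setOf_eq, Set.mem_singleton_iff]
      exact ⟨fun h' => h'.1, fun h' => ⟨h', h' ▸ h⟩⟩]
    exact Set.ncard_singleton e
  · rw [show {e' ∈ ({e} : Set (Sym2 V)) | x ∈ e'} = ∅ by
      ext e'; simp; intro h'; subst h'; simpa using h]
    simp

lemma oddset_symmDiff (A B : Set (Sym2 V)) :
    {x | Odd (dd (symmDiff A B) x)}
      = symmDiff {x | Odd (dd A x)} {x | Odd (dd B x)} := by
  ext x
  rw [Set.mem_setOf_eq, odd_dd_symmDiff, Set.mem_symmDiff]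
  simp only [Set.mem_setOf_eq]
  tauto

lemma pair_eq_symmDiff {b c : V} (hbc : b ≠ c) :
    ({b, c} : Set V) = symmDiff {b} {c} := by
  ext x
  rw [Set.mem_symmDiff]
  simp only [Set.mem_insert_iff, Set.mem_singleton_iff]
  constructor
  · rintro (rfl | rfl)
    · exact Or.inl ⟨rfl, hbc⟩
    · exact Or.inr ⟨rfl, fun h => hbc h.symm⟩
  · tauto

lemma oddset_single_edge (a b : V) (hab : a ≠ b) :
    {x | Odd (dd {s(a, b)} x)} = ({a, b} : Set V) := by
  ext x
  by_cases h : x ∈ s(a, b)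
  · simp only [Set.mem_setOf_eq, dd_singleton, if_pos h]
    rw [Sym2.mem_iff] at h
    simp only [Set.mem_insert_iff, Set.mem_singleton_iff]
    exact iff_of_true odd_one h
  · simp only [Set.mem_setOf_eq, dd_singleton, if_neg h]
    rw [Sym2.mem_iff] at h
    simp only [Set.mem_insert_iff, Set.mem_singleton_iff]
    exact iff_of_false (by simp) h

lemma isJoin_symmDiff {G : GraftGraph V} {T : Set V} {F : Set (Sym2 V)} (hF : G.IsJoin T F)
    {S : Set (Sym2 V)} (hS : S ⊆ G.edges) :
    G.IsJoin (symmDiff T {x | Odd (dd S x)}) (symmDiff F S) := by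
  constructor
  · intro e he
    rw [symmDiff_eq_union] at he
    rcases he with h | h
    · exact hF.1 h.1
    · exact hS h.1
  · intro v
    have h1 : Odd (dd (symmDiff F S) v) ↔ (Odd (dd F v) ↔ ¬ Odd (dd S v)) :=
      odd_dd_symmDiff F S v
    have h2 : Odd (dd F v) ↔ v ∈ T := hF.2 v
    show Odd (dd (symmDiff F S) v) ↔ _
    rw [Set.mem_symmDiff, h1, h2]
    simp only [Set.mem_setOf_eq]
    tauto

lemma nu_le {G : GraftGraph V} {T' : Set V} {F' : Set (Sym2 V)} (h : G.IsJoin T' F') :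
    G.nu T' ≤ F'.ncard := Nat.sInf_le ⟨F', h, rfl⟩

lemma two_mul_le {G : GraftGraph V} {T : Set V} {r : V} (hfc : G.FactorCriticalGraft T r)
    {F : Set (Sym2 V)} (hmin : G.IsMinJoin T F) (S : Set (Sym2 V)) (hS : S ⊆ G.edges)
    (h : {x | Odd (dd S x)} = ∅ ∨
      ∃ u, u ∈ G.verts ∧ u ≠ r ∧ {x | Odd (dd S x)} = {r, u}) :
    2 * (S ∩ F).ncard ≤ S.ncard := by
  have hj := isJoin_symmDiff hmin.1 hS
  have hnu : G.nu (symmDiff T {x | Odd (dd S x)}) = G.nu T := by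
    rcases h with h | ⟨u, hu, hur, h⟩
    · rw [h, show (∅ : Set V) = ⊥ from rfl, symmDiff_bot]
    · rw [h]
      exact (hfc.2.2.2 u ⟨hu, by simpa using hur⟩).symm
  have hle : F.ncard ≤ (symmDiff F S).ncard := by
    calc F.ncard = G.nu T := hmin.2
    _ = G.nu (symmDiff T {x | Odd (dd S x)}) := hnu.symm
    _ ≤ (symmDiff F S).ncard := nu_le hj
  have e1 := ncard_symmDiff F S
  have e2 := ncard_diff_add_inter F S
  have e3 := ncard_diff_add_inter S F
  have e4 : (S ∩ F).ncard = (F ∩ S).ncard := by rw [Set.inter_comm]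
  omega

lemma exists_parity_set {G : GraftGraph V} {u w : V} (h : Relation.ReflTransGen G.Adj u w) :
    ∃ S : Set (Sym2 V), S ⊆ G.edges ∧ {x | Odd (dd S x)} = symmDiff {u} {w} := by
  induction h with
  | refl =>
    refine ⟨∅, by simp, ?_⟩
    ext x
    simp only [Set.mem_setOf_eq, symmDiff_self, Set.bot_eq_empty,
      Set.mem_empty_iff_false, iff_false]
    rw [show dd (∅ : Set (Sym2 V)) x = 0 from by simp [dd]]
    simp
  | @tail b c hub hbc ih =>
    obtain ⟨S, hS, hO⟩ := ih
    have hedge : s(b, c) ∈ G.edges := hbc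
    have hbc' : b ≠ c := by
      intro hh
      exact G.not_isDiag _ hedge (by rw [Sym2.mk_isDiag_iff]; exact hh)
    refine ⟨symmDiff S {s(b, c)}, ?_, ?_⟩
    · intro e he
      rw [symmDiff_eq_union] at he
      rcases he with h | h
      · exact hS h.1
      · rw [Set.mem_singleton_iff.mp h.1.out]  -- fix below maybe
        exact hedge
    · rw [oddset_symmDiff, hO, oddset_single_edge b c hbc', pair_eq_symmDiff hbc',
        symmDiff_assoc, symmDiff_symmDiff_cancel_left]

lemma exists_minJoin_pair {G : GraftGraph V} {T : Set V} {r : V}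
    (hfc : G.FactorCriticalGraft T r) {F : Set (Sym2 V)} (hmin : G.IsMinJoin T F)
    {v : V} (hv : v ∈ G.verts) (hvr : v ≠ r) :
    ∃ F', G.IsJoin (symmDiff T {r, v}) F' ∧ F'.ncard = F.ncard := by
  obtain ⟨S, hS, hO⟩ := exists_parity_set (hfc.1.2 r hfc.2.2.1 v hv)
  have hrv : r ≠ v := fun h => hvr h.symm
  have hj : G.IsJoin (symmDiff T {r, v}) (symmDiff F S) := by
    have h := isJoin_symmDiff hmin.1 hS
    rwa [hO, ← pair_eq_symmDiff hrv] at h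
  have hne : {n | ∃ F', G.IsJoin (symmDiff T {r, v}) F' ∧ F'.ncard = n}.Nonempty :=
    ⟨(symmDiff F S).ncard, symmDiff F S, hj, rfl⟩
  obtain ⟨F', hF', hcard⟩ := Nat.sInf_mem hne
  refine ⟨F', hF', ?_⟩
  rw [hcard, show sInf {n | ∃ F', G.IsJoin (symmDiff T {r, v}) F' ∧ F'.ncard = n}
      = G.nu (symmDiff T {r, v}) from rfl,
    ← hfc.2.2.2 v ⟨hv, by simpa using hvr⟩, hmin.2]

/-! ### Walk machinery -/

def graphOf (D : Set (Sym2 V)) : SimpleGraph V where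
  Adj a b := a ≠ b ∧ s(a, b) ∈ D
  symm := by
    constructor
    rintro a b ⟨h1, h2⟩
    exact ⟨h1.symm, by rwa [Sym2.eq_swap]⟩
  loopless := by constructor; rintro a ⟨h, _⟩; exact h rfl

lemma mem_of_graphOf_edge {D : Set (Sym2 V)} {e : Sym2 V}
    (h : e ∈ (graphOf D).edgeSet) : e ∈ D := by
  induction e using Sym2.ind with
  | _ a b => exact ((SimpleGraph.mem_edgeSet (graphOf D)).mp h).2

lemma card_filter_mem_eq_two {e : Sym2 V} (h : ¬ e.IsDiag) :
    (Finset.univ.filter (fun x : V => x ∈ e)).card = 2 := by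
  induction e using Sym2.ind with
  | _ a b =>
    have hab : a ≠ b := by rwa [Sym2.mk_isDiag_iff] at h
    rw [show Finset.univ.filter (fun x : V => x ∈ s(a, b)) = {a, b} by
      ext x
      simp [Sym2.mem_iff]]
    exact Finset.card_pair hab

lemma dd_eq_card_filter (S : Set (Sym2 V)) (x : V) :
    dd S x = ((Set.toFinite S).toFinset.filter (fun e => x ∈ e)).card := by
  rw [dd, ← Set.ncard_coe_finset]
  congr 1
  ext e
  simp [Set.Finite.mem_toFinset, Set.mem_setOf_eq]

lemma handshake (S : Set (Sym2 V)) (hnd : ∀ e ∈ S, ¬ e.IsDiag) :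
    ∑ x : V, dd S x = 2 * S.ncard := by
  calc ∑ x : V, dd S x
      = ∑ x : V, ∑ e ∈ (Set.toFinite S).toFinset, if x ∈ e then 1 else 0 := by
        refine Finset.sum_congr rfl fun x _ => ?_
        rw [dd_eq_card_filter, Finset.card_filter]
    _ = ∑ e ∈ (Set.toFinite S).toFinset, ∑ x : V, if x ∈ e then 1 else 0 :=
        Finset.sum_comm
    _ = ∑ e ∈ (Set.toFinite S).toFinset, (2 : ℕ) := by
        refine Finset.sum_congr rfl fun e he => ?_
        rw [← Finset.card_filter]
        exact card_filter_mem_eq_two (hnd e ((Set.Finite.mem_toFinset _).mp he))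
    _ = 2 * S.ncard := by
        rw [Finset.sum_const, smul_eq_mul, ← Set.ncard_coe_finset,
          Set.Finite.coe_toFinset, mul_comm]

lemma reachable_of_oddset {D : Set (Sym2 V)} (hnd : ∀ e ∈ D, ¬ e.IsDiag) {r v : V}
    (hodd : ∀ x, Odd (dd D x) ↔ x = r ∨ x = v) : (graphOf D).Reachable r v := by
  by_contra hnr
  set K : Set V := {x | (graphOf D).Reachable r x} with hK
  have hrK : r ∈ K := SimpleGraph.Reachable.refl r
  have hvK : v ∉ K := hnr
  have hadjK : ∀ a b : V, (graphOf D).Adj a b → (a ∈ K ↔ b ∈ K) := by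
    intro a b hab
    constructor
    · intro ha; exact SimpleGraph.Reachable.trans ha hab.reachable
    · intro hb; exact SimpleGraph.Reachable.trans hb hab.symm.reachable
  set S : Set (Sym2 V) := {e ∈ D | ∃ x ∈ e, x ∈ K} with hS
  have hSsub : S ⊆ D := fun e he => he.1
  have hdd1 : ∀ x ∈ K, dd S x = dd D x := by
    intro x hx
    show ({e ∈ S | x ∈ e}).ncard = ({e ∈ D | x ∈ e}).ncard
    congr 1
    ext e
    simp only [Set.mem_setOf_eq]
    constructor
    · rintro ⟨⟨h1, _⟩, h2⟩; exact ⟨h1, h2⟩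
    · rintro ⟨h1, h2⟩; exact ⟨⟨h1, ⟨x, h2, hx⟩⟩, h2⟩
  have hdd0 : ∀ x, x ∉ K → dd S x = 0 := by
    intro x hx
    have hempty : {e ∈ S | x ∈ e} = (∅ : Set (Sym2 V)) := by
      ext e
      simp only [Set.mem_setOf_eq, Set.mem_empty_iff_false, iff_false]
      rintro ⟨⟨heD, y, hy, hyK⟩, hxe⟩
      apply hx
      induction e using Sym2.ind with
      | _ a b =>
        have hab : a ≠ b := fun hh =>
          hnd _ heD (by rw [Sym2.mk_isDiag_iff]; exact hh)
        have hadj : (graphOf D).Adj a b := ⟨hab, heD⟩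
        rw [Sym2.mem_iff] at hy hxe
        rcases hy with rfl | rfl <;> rcases hxe with rfl | rfl
        · exact hyK
        · exact (hadjK _ _ hadj).mp hyK
        · exact (hadjK _ _ hadj).mpr hyK
        · exact hyK
    show ({e ∈ S | x ∈ e}).ncard = 0
    rw [hempty]
    simp
  have hndS : ∀ e ∈ S, ¬ e.IsDiag := fun e he => hnd e (hSsub he)
  have htot := handshake S hndS
  have hdvd : 2 ∣ ∑ x ∈ Finset.univ.erase r, dd S x := by
    refine Finset.dvd_sum fun x hx => ?_
    have hxr : x ≠ r := (Finset.mem_erase.mp hx).1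
    by_cases hxK : x ∈ K
    · rw [hdd1 x hxK]
      rcases Nat.even_or_odd (dd D x) with he | ho
      · exact he.two_dvd
      · rcases (hodd x).mp ho with rfl | rfl
        · exact absurd rfl hxr
        · exact absurd hxK hvK
    · rw [hdd0 x hxK]
      exact dvd_zero 2
  have hoddr : Odd (dd S r) := by
    rw [hdd1 r hrK]
    exact (hodd r).mpr (Or.inl rfl)
  have hsum : ∑ x ∈ Finset.univ.erase r, dd S x + dd S r = ∑ x : V, dd S x :=
    Finset.sum_erase_add _ _ (Finset.mem_univ r)
  rw [Nat.odd_iff] at hoddr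
  omega

lemma dd_list {L : List (Sym2 V)} (hL : L.Nodup) (x : V) :
    dd {e | e ∈ L} x = L.countP (fun e => x ∈ e) := by
  have h1 : {e ∈ {e | e ∈ L} | x ∈ e}
      = ↑((L.filter (fun e => x ∈ e)).toFinset) := by
    ext e
    simp [List.mem_filter]
  rw [dd, h1, Set.ncard_coe_finset, List.toFinset_card_of_nodup (hL.filter _),
    List.countP_eq_length_filter]

lemma countP_start_le_one {G' : SimpleGraph V} {a b : V} (p : G'.Walk a b)
    (hp : p.IsPath) : p.edges.countP (fun e => a ∈ e) ≤ 1 := by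
  induction p with
  | nil => simp
  | @cons u c w h q ih =>
    rw [SimpleGraph.Walk.edges_cons, List.countP_cons]
    have h0 : q.edges.countP (fun e => u ∈ e) = 0 := by
      rw [List.countP_eq_zero]
      intro e he
      simp only [decide_eq_true_eq]
      intro hue
      obtain ⟨y, rfl⟩ := Sym2.mem_iff_exists.mp hue
      have hus : u ∈ q.support := SimpleGraph.Walk.fst_mem_support_of_mem_edges q he
      exact ((SimpleGraph.Walk.cons_isPath_iff h q).mp hp).2 hus
    rw [h0]
    simp

lemma countP_end_le_one {G' : SimpleGraph V} {a b : V} (p : G'.Walk a b)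
    (hp : p.IsPath) : p.edges.countP (fun e => b ∈ e) ≤ 1 := by
  have h := countP_start_le_one p.reverse hp.reverse
  rwa [SimpleGraph.Walk.edges_reverse, List.countP_reverse] at h

end S4aux


/-- Let `(G,T)` be a factor-critical graft with root `r` and `F` a
minimum join of `(G,T)`. Then every vertex `v ∈ V(G) ∖ {r}` is incident to
exactly one edge of `F`, and `r` is incident to no edge of `F`. -/
theorem statement4 {V : Type*} [Fintype V] (G : GraftGraph V) (T : Set V) (r : V)
    (hfc : G.FactorCriticalGraft T r) (F : Set (Sym2 V))
    (hmin : G.IsMinJoin T F) :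
    (∀ v ∈ G.verts \ {r}, {e ∈ F | v ∈ e}.ncard = 1) ∧
      {e ∈ F | r ∈ e} = ∅ := by
  classical
  open S4aux in
  -- Step 1 : no edge of `F` is incident to `r`.
  have hr0 : {e ∈ F | r ∈ e} = ∅ := by
    by_contra hne
    obtain ⟨e, heF, hre⟩ := Set.nonempty_iff_ne_empty.mpr hne
    obtain ⟨u, rfl⟩ := Sym2.mem_iff_exists.mp hre
    have heE : s(r, u) ∈ G.edges := hmin.1.1 heF
    have hru : r ≠ u := fun h => G.not_isDiag _ heE (by rw [Sym2.mk_isDiag_iff]; exact h)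
    have huV : u ∈ G.verts := G.mem_verts _ heE u (Sym2.mem_mk_right r u)
    have hkey := two_mul_le hfc hmin {s(r, u)} (Set.singleton_subset_iff.mpr heE)
      (Or.inr ⟨u, huV, fun h => hru h.symm, oddset_single_edge r u hru⟩)
    rw [Set.inter_eq_left.mpr (Set.singleton_subset_iff.mpr heF),
      Set.ncard_singleton] at hkey
    omega
  have hddr0 : dd F r = 0 := by
    show ({e ∈ F | r ∈ e}).ncard = 0
    rw [hr0]; simp
  -- Step 2 : every vertex other than `r` lies in `T`.
  have hvT : ∀ v ∈ G.verts, v ≠ r → v ∈ T := by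
    intro v hvV hvr
    by_contra hvnT
    obtain ⟨F', hF'j, hF'c⟩ := exists_minJoin_pair hfc hmin hvV hvr
    have hvT' : v ∈ symmDiff T ({r, v} : Set V) := by
      rw [Set.mem_symmDiff]; right; exact ⟨Or.inr rfl, hvnT⟩
    have hoddv : Odd (dd F' v) := (hF'j.2 v).mpr hvT'
    have hpos : dd F' v ≠ 0 := by intro h; rw [h] at hoddv; simpa using hoddv
    have hnonempty : ({e ∈ F' | v ∈ e}).Nonempty := Set.nonempty_of_ncard_ne_zero hpos
    obtain ⟨e, heF', hve⟩ := hnonempty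
    obtain ⟨u, rfl⟩ := Sym2.mem_iff_exists.mp hve
    have heE : s(v, u) ∈ G.edges := hF'j.1 heF'
    have hvu : v ≠ u := fun h => G.not_isDiag _ heE (by rw [Sym2.mk_isDiag_iff]; exact h)
    have huV : u ∈ G.verts := G.mem_verts _ heE u (Sym2.mem_mk_right v u)
    have hjoin2 : G.IsJoin (symmDiff (symmDiff T ({r, v} : Set V)) ({v, u} : Set V))
        (symmDiff F' {s(v, u)}) := by
      have h := isJoin_symmDiff hF'j (Set.singleton_subset_iff.mpr heE)
      rwa [oddset_single_edge v u hvu] at h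
    have hsd : symmDiff F' {s(v, u)} = F' \ {s(v, u)} := by
      rw [symmDiff_eq_union,
        show ({s(v, u)} : Set (Sym2 V)) \ F' = ∅ from
          Set.diff_eq_empty.mpr (Set.singleton_subset_iff.mpr heF')]
      simp
    have hF'pos : 1 ≤ F'.ncard :=
      (Set.ncard_pos (Set.toFinite _)).mpr ⟨_, heF'⟩
    have hcard2 : (symmDiff F' {s(v, u)}).ncard = F.ncard - 1 ∧ 1 ≤ F.ncard := by
      rw [hsd, Set.ncard_diff_singleton_of_mem heF', hF'c]
      exact ⟨rfl, hF'c ▸ hF'pos⟩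
    by_cases hur : u = r
    · have hP : ({v, u} : Set V) = ({r, v} : Set V) := by
        rw [hur]; exact Set.pair_comm v r
      have hTT : symmDiff (symmDiff T ({r, v} : Set V)) ({v, u} : Set V) = T := by
        rw [hP, symmDiff_symmDiff_cancel_right]
      rw [hTT] at hjoin2
      have h := nu_le hjoin2
      rw [hcard2.1, ← hmin.2] at h
      have := hcard2.2
      omega
    · have hTT : symmDiff (symmDiff T ({r, v} : Set V)) ({v, u} : Set V)
          = symmDiff T ({r, u} : Set V) := by
        rw [symmDiff_assoc]
        congr 1
        ext x
        rw [Set.mem_symmDiff]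
        simp only [Set.mem_insert_iff, Set.mem_singleton_iff]
        constructor
        · rintro (⟨(rfl | rfl), h2⟩ | ⟨(rfl | rfl), h2⟩) <;> tauto
        · rintro (rfl | rfl)
          · exact Or.inl ⟨Or.inl rfl, fun h => by
              rcases h with rfl | rfl
              · exact hvr rfl
              · exact hur rfl⟩
          · exact Or.inr ⟨Or.inr rfl, fun h => by
              rcases h with rfl | rfl
              · exact hur rfl
              · exact hvu rfl⟩
      rw [hTT] at hjoin2
      have h := nu_le hjoin2
      rw [hcard2.1] at h
      have hcriteq := hfc.2.2.2 u ⟨huV, by simpa using hur⟩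
      rw [← hcriteq, ← hmin.2] at h
      have := hcard2.2
      omega
  -- Step 3 : the degree bound.
  refine ⟨?_, hr0⟩
  intro v hv
  obtain ⟨hvV, hvr'⟩ := hv
  have hvr : v ≠ r := by simpa using hvr'
  have hrv : r ≠ v := fun h => hvr h.symm
  have hoddv : Odd (dd F v) := (hmin.1.2 v).mpr (hvT v hvV hvr)
  have hnotlt : ¬ 1 < dd F v := by
    intro h2
    obtain ⟨e1, e2, he1, he2, hne12⟩ :=
      (Set.one_lt_ncard_iff (Set.toFinite _)).mp h2
    obtain ⟨he1F, hve1⟩ := he1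
    obtain ⟨he2F, hve2⟩ := he2
    obtain ⟨a1, rfl⟩ := Sym2.mem_iff_exists.mp hve1
    obtain ⟨a2, rfl⟩ := Sym2.mem_iff_exists.mp hve2
    -- basic facts about the two edges
    have hfacts : ∀ a : V, s(v, a) ∈ F →
        a ≠ v ∧ a ≠ r ∧ a ∈ G.verts := by
      intro a haF
      have haE : s(v, a) ∈ G.edges := hmin.1.1 haF
      have hav : a ≠ v := fun h =>
        G.not_isDiag _ haE (by rw [Sym2.mk_isDiag_iff]; exact h.symm)
      have har : a ≠ r := by
        intro h
        have : s(v, a) ∈ {e ∈ F | r ∈ e} := ⟨haF, by rw [h]; exact Sym2.mem_mk_right v r⟩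
        rw [hr0] at this
        exact this
      have hrv1 : r ∉ s(v, a) := by
        rw [Sym2.mem_iff]
        rintro (rfl | rfl)
        · exact hvr rfl
        · exact har rfl
      exact ⟨hav, har, G.mem_verts _ haE a (Sym2.mem_mk_right v a)⟩
    -- the auxiliary minimum join and the symmetric difference D
    obtain ⟨F', hF'j, hF'c⟩ := exists_minJoin_pair hfc hmin hvV hvr
    set D : Set (Sym2 V) := symmDiff F F' with hD
    have hDsub : D ⊆ G.edges := by
      intro e he
      rw [hD, symmDiff_eq_union] at he
      rcases he with h | h
      · exact hmin.1.1 h.1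
      · exact hF'j.1 h.1
    have hDodd : ∀ x, Odd (dd D x) ↔ x = r ∨ x = v := by
      intro x
      rw [hD, odd_dd_symmDiff]
      have h1 : Odd (dd F x) ↔ x ∈ T := hmin.1.2 x
      have h2 : Odd (dd F' x) ↔ x ∈ symmDiff T ({r, v} : Set V) := hF'j.2 x
      rw [h1, h2, Set.mem_symmDiff]
      simp only [Set.mem_insert_iff, Set.mem_singleton_iff]
      tauto
    have hDnd : ∀ e ∈ D, ¬ e.IsDiag := fun e he => G.not_isDiag e (hDsub he)
    obtain ⟨p0⟩ := reachable_of_oddset hDnd hDodd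
    set q : (graphOf D).Walk r v := p0.toPath.1 with hq0
    have hq : q.IsPath := p0.toPath.2
    set PS : Set (Sym2 V) := {e | e ∈ q.edges} with hPS
    have hPSD : PS ⊆ D := fun e he =>
      mem_of_graphOf_edge (q.edges_subset_edgeSet he)
    have hPSodd : ∀ x, Odd (dd PS x) ↔ x = r ∨ x = v := by
      intro x
      rw [hPS, dd_list hq.isTrail.edges_nodup x, ← Nat.not_even_iff_odd,
        hq.isTrail.even_countP_edges_iff x]
      constructor
      · intro h
        by_contra hc
        push_neg at hc
        exact h fun _ => ⟨hc.1, hc.2⟩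
      · rintro (rfl | rfl) h
        · exact (h hrv).1 rfl
        · exact (h hrv).2 rfl
    -- weight bookkeeping
    have hkeyD : D.ncard = 2 * (D ∩ F).ncard := by
      have hDF : D ∩ F = F \ F' := by
        rw [hD, symmDiff_eq_union]
        ext e
        simp only [Set.mem_inter_iff, Set.mem_union, Set.mem_diff]
        tauto
      have h1 := ncard_symmDiff F F'
      have h2 := ncard_diff_add_inter F F'
      have h3 := ncard_diff_add_inter F' F
      have h4 : (F' ∩ F).ncard = (F ∩ F').ncard := by rw [Set.inter_comm]
      have h5 : F'.ncard = F.ncard := hF'c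
      rw [hDF, hD]
      omega
    have hDP : ∀ x, dd (D \ PS) x + dd PS x = dd D x := by
      intro x
      have h := dd_diff_add_inter D PS x
      rwa [dd_congr (Set.inter_eq_right.mpr hPSD) x] at h
    have hDPeven : ∀ x, ¬ Odd (dd (D \ PS) x) := by
      intro x hox
      have ha := hDodd x
      have hb := hPSodd x
      have hc := hDP x
      rcases Nat.even_or_odd (dd PS x) with hPSe | hPSo
      · have hDo : Odd (dd D x) := by
          rw [Nat.odd_iff] at hox ⊢
          rw [Nat.even_iff] at hPSe
          omega
        have := hb.mpr (ha.mp hDo)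
        rw [Nat.odd_iff] at this
        rw [Nat.even_iff] at hPSe
        omega
      · have hDo : Odd (dd D x) := ha.mpr (hb.mp hPSo)
        rw [Nat.odd_iff] at hox hPSo hDo
        omega
    have hwDP := two_mul_le hfc hmin (D \ PS) (fun e he => hDsub he.1)
      (Or.inl (by
        ext x
        simp only [Set.mem_setOf_eq, Set.mem_empty_iff_false, iff_false]
        exact hDPeven x))
    have hNsplit : (D \ PS).ncard + PS.ncard = D.ncard := by
      have h := ncard_diff_add_inter D PS
      rwa [Set.inter_eq_right.mpr hPSD] at h
    have hFsplit : ((D \ PS) ∩ F).ncard + (PS ∩ F).ncard = (D ∩ F).ncard := by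
      have hu : ((D \ PS) ∩ F) ∪ (PS ∩ F) = D ∩ F := by
        ext e
        simp only [Set.mem_union, Set.mem_inter_iff, Set.mem_diff]
        constructor
        · rintro (⟨⟨h1, _⟩, h2⟩ | ⟨h1, h2⟩)
          · exact ⟨h1, h2⟩
          · exact ⟨hPSD h1, h2⟩
        · rintro ⟨h1, h2⟩
          by_cases hi : e ∈ PS
          · exact Or.inr ⟨hi, h2⟩
          · exact Or.inl ⟨⟨h1, hi⟩, h2⟩
      have hdisj : Disjoint ((D \ PS) ∩ F) (PS ∩ F) := by
        rw [Set.disjoint_left]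
        rintro e ⟨⟨_, he⟩, _⟩ ⟨hi, _⟩
        exact he hi
      rw [← hu, Set.ncard_union_eq hdisj (Set.toFinite _) (Set.toFinite _)]
    have hPSw : PS.ncard ≤ 2 * (PS ∩ F).ncard := by omega
    -- choose one of the two edges avoiding the path
    have hnotboth : ¬ (s(v, a1) ∈ q.edges ∧ s(v, a2) ∈ q.edges) := by
      rintro ⟨h1, h2⟩
      have hcount := countP_end_le_one q hq
      have h2le : (2 : ℕ) ≤ q.edges.countP (fun e => v ∈ e) := by
        rw [List.countP_eq_length_filter]
        have hm1 : s(v, a1) ∈ q.edges.filter (fun e => v ∈ e) :=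
          List.mem_filter.mpr ⟨h1, by simp⟩
        have hm2 : s(v, a2) ∈ q.edges.filter (fun e => v ∈ e) :=
          List.mem_filter.mpr ⟨h2, by simp⟩
        have hsub : ({s(v, a1), s(v, a2)} : Finset (Sym2 V))
            ⊆ (q.edges.filter (fun e => v ∈ e)).toFinset := by
          intro x hx
          rcases Finset.mem_insert.mp hx with rfl | hx
          · exact List.mem_toFinset.mpr hm1
          · rw [Finset.mem_singleton.mp hx]
            exact List.mem_toFinset.mpr hm2
        calc (2 : ℕ) = ({s(v, a1), s(v, a2)} : Finset (Sym2 V)).card :=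
              (Finset.card_pair hne12).symm
          _ ≤ (q.edges.filter (fun e => v ∈ e)).toFinset.card :=
              Finset.card_le_card hsub
          _ ≤ (q.edges.filter (fun e => v ∈ e)).length := List.toFinset_card_le _
      omega
    obtain ⟨aa, haF, hnotPS⟩ : ∃ aa, s(v, aa) ∈ F ∧ s(v, aa) ∉ PS := by
      by_cases h1 : s(v, a1) ∈ q.edges
      · exact ⟨a2, he2F, fun hmem => hnotboth ⟨h1, hmem⟩⟩
      · exact ⟨a1, he1F, h1⟩
    obtain ⟨hav, har, haV⟩ := hfacts aa haF
    -- the final violating set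
    set Sf : Set (Sym2 V) := PS ∪ {s(v, aa)} with hSf
    have hdisjf : Disjoint PS {s(v, aa)} := by
      rw [Set.disjoint_right]
      intro e he
      rw [Set.mem_singleton_iff] at he
      subst he
      exact hnotPS
    have hSfodd : {x | Odd (dd Sf x)} = ({r, aa} : Set V) := by
      ext x
      rw [Set.mem_setOf_eq, hSf, dd_union hdisjf, dd_singleton]
      simp only [Set.mem_insert_iff, Set.mem_singleton_iff]
      by_cases hxe : x ∈ s(v, aa)
      · rw [if_pos hxe]
        rw [Sym2.mem_iff] at hxe
        rcases hxe with rfl | rfl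
        · -- x = v : degree becomes even, and v ∉ {r, aa}
          have hPSv : Odd (dd PS x) := (hPSodd x).mpr (Or.inr rfl)
          rw [Nat.odd_iff] at hPSv ⊢
          constructor
          · intro h; omega
          · rintro (rfl | rfl)
            · exact absurd rfl hvr
            · exact absurd rfl hav
        · -- x = aa
          have hPSa : ¬ Odd (dd PS x) := by
            rw [hPSodd x]
            push_neg
            exact ⟨har, hav⟩
          rw [Nat.odd_iff] at hPSa ⊢
          constructor
          · intro _; exact Or.inr rfl
          · intro _; omega
      · rw [if_neg hxe, add_zero]
        rw [Sym2.mem_iff] at hxe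
        push_neg at hxe
        rw [hPSodd x]
        constructor
        · rintro (rfl | rfl)
          · exact Or.inl rfl
          · exact absurd rfl hxe.1
        · rintro (rfl | rfl)
          · exact Or.inl rfl
          · exact absurd rfl hxe.2
    have hSfsub : Sf ⊆ G.edges := by
      intro e he
      rcases he with h | h
      · exact hDsub (hPSD h)
      · rw [Set.mem_singleton_iff.mp h]
        exact hmin.1.1 haF
    have hkeyf := two_mul_le hfc hmin Sf hSfsub (Or.inr ⟨aa, haV, har, hSfodd⟩)
    have hc1 : Sf.ncard = PS.ncard + 1 := by
      rw [hSf, Set.ncard_union_eq hdisjf (Set.toFinite _) (Set.toFinite _),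
        Set.ncard_singleton]
    have hc2 : (Sf ∩ F).ncard = (PS ∩ F).ncard + 1 := by
      have he : Sf ∩ F = (PS ∩ F) ∪ {s(v, aa)} := by
        rw [hSf]
        ext e
        simp only [Set.mem_union, Set.mem_inter_iff, Set.mem_singleton_iff]
        constructor
        · rintro ⟨h1 | h1, h2⟩
          · exact Or.inl ⟨h1, h2⟩
          · exact Or.inr h1
        · rintro (⟨h1, h2⟩ | h1)
          · exact ⟨Or.inl h1, h2⟩
          · subst h1
            exact ⟨Or.inr rfl, haF⟩
      have hd : Disjoint (PS ∩ F) ({s(v, aa)} : Set (Sym2 V)) :=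
        hdisjf.mono_left Set.inter_subset_left
      rw [he, Set.ncard_union_eq hd (Set.toFinite _) (Set.toFinite _),
        Set.ncard_singleton]
    omega
  show dd F v = 1
  rw [Nat.odd_iff] at hoddv
  omega
end

section
/- Let (G,T;A,B) be a bipartite graft with G connected, let r ∈ A, and let F be a minimum join of (G,T). If dist_F(r,v) = 0 for every v ∈ A and dist_F(r,v) = −1 for every v ∈ B, then (G,T;A,B) is a comb. -/
namespace GraftGraph

variable {V : Type*} [Fintype V]

set_option linter.unusedSectionVars false

open scoped Classical

lemma adj_symm {P : GraftGraph V} {u v : V} (h : P.Adj u v) : P.Adj v u := by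
  unfold Adj at *
  rwa [Sym2.eq_swap]

lemma adj_mem_left {P : GraftGraph V} {u v : V} (h : P.Adj u v) : u ∈ P.verts :=
  P.mem_verts _ h u (Sym2.mem_mk_left u v)

lemma adj_mem_right {P : GraftGraph V} {u v : V} (h : P.Adj u v) : v ∈ P.verts :=
  P.mem_verts _ h v (Sym2.mem_mk_right u v)

lemma adj_ne {P : GraftGraph V} {u v : V} (h : P.Adj u v) : u ≠ v := by
  intro he
  exact P.not_isDiag _ h (by simp [he])

lemma deg_def (P : GraftGraph V) (v : V) : P.deg v = {e ∈ P.edges | v ∈ e}.ncard := rfl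

lemma edge_unique_of_deg_le_one {P : GraftGraph V} {y : V} (h : P.deg y ≤ 1) {e1 e2 : Sym2 V}
    (h1 : e1 ∈ P.edges) (hy1 : y ∈ e1) (h2 : e2 ∈ P.edges) (hy2 : y ∈ e2) : e1 = e2 :=
  (Set.ncard_le_one (Set.toFinite _)).1 h e1 ⟨h1, hy1⟩ e2 ⟨h2, hy2⟩

lemma deg_pos_of_edge {P : GraftGraph V} {e : Sym2 V} {v : V} (he : e ∈ P.edges) (hv : v ∈ e) :
    1 ≤ P.deg v := by
  have : 0 < {e ∈ P.edges | v ∈ e}.ncard := (Set.ncard_pos (Set.toFinite _)).2 ⟨e, he, hv⟩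
  rw [deg_def]
  exact this

lemma exists_adj_of_ne {P : GraftGraph V} {u v : V} (h : Relation.ReflTransGen P.Adj u v)
    (hne : u ≠ v) : ∃ w, P.Adj w v := by
  induction h with
  | refl => exact absurd rfl hne
  | tail _ h2 _ => exact ⟨_, h2⟩

lemma deg_pos_of_connected {P : GraftGraph V} (hc : P.Connected) {u v : V}
    (hu : u ∈ P.verts) (hv : v ∈ P.verts) (hne : u ≠ v) : 1 ≤ P.deg v := by
  obtain ⟨w, hw⟩ := exists_adj_of_ne (hc.2 u hu v hv) hne
  exact deg_pos_of_edge hw (Sym2.mem_mk_right w v)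

/-- Remove a vertex (and all incident edges) from a graph. -/
def erase (P : GraftGraph V) (y : V) : GraftGraph V where
  verts := P.verts \ {y}
  edges := {e ∈ P.edges | y ∉ e}
  not_isDiag := fun e he => P.not_isDiag e he.1
  mem_verts := by
    intro e he x hx
    refine ⟨P.mem_verts e he.1 x hx, ?_⟩
    intro h
    rw [Set.mem_singleton_iff] at h
    exact he.2 (h ▸ hx)

lemma erase_verts (P : GraftGraph V) (y : V) : (P.erase y).verts = P.verts \ {y} := rfl

lemma erase_edges (P : GraftGraph V) (y : V) : (P.erase y).edges = {e ∈ P.edges | y ∉ e} := rfl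

lemma mem_of_mem_of_ne {e : Sym2 V} {v y : V} (hv : v ∈ e) (hy : y ∈ e) (hne : v ≠ y)
    (hd : ¬ e.IsDiag) : e = s(v, y) :=
  ((Sym2.mem_and_mem_iff hne).1 ⟨hv, hy⟩)

lemma erase_inc {P : GraftGraph V} {y v : V} (hvy : v ≠ y) :
    {e ∈ P.edges | v ∈ e} = {e ∈ (P.erase y).edges | v ∈ e} ∪ ({s(v,y)} ∩ P.edges) := by
  ext e
  simp only [Set.mem_union, Set.mem_inter_iff, Set.mem_singleton_iff, Set.mem_setOf_eq,
    erase_edges]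
  constructor
  · rintro ⟨he, hv⟩
    by_cases hy : y ∈ e
    · exact Or.inr ⟨(Sym2.mem_and_mem_iff hvy).1 ⟨hv, hy⟩, he⟩
    · exact Or.inl ⟨⟨he, hy⟩, hv⟩
  · rintro (⟨⟨he, _⟩, hv⟩ | ⟨rfl, he⟩)
    · exact ⟨he, hv⟩
    · exact ⟨he, Sym2.mem_mk_left v y⟩

lemma deg_erase {P : GraftGraph V} {y v : V} (hvy : v ≠ y) :
    P.deg v = (P.erase y).deg v + (if s(v,y) ∈ P.edges then 1 else 0) := by
  rw [deg_def, deg_def, erase_inc (P := P) hvy, Set.ncard_union_eq ?_ (Set.toFinite _)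
    (Set.toFinite _)]
  · congr 1
    split_ifs with h
    · rw [Set.inter_eq_left.2 (by simpa using h)]
      exact Set.ncard_singleton _
    · rw [Set.singleton_inter_eq_empty.2 h]
      exact Set.ncard_empty _
  · rw [Set.disjoint_left]
    rintro e ⟨he, _⟩ ⟨rfl, _⟩
    exact he.2 (Sym2.mem_mk_right v y)

lemma erase_connects {P : GraftGraph V} {y : V} (hdeg : P.deg y ≤ 1) {u v : V}
    (h : Relation.ReflTransGen P.Adj u v) (hu : u ≠ y) :
    (v ≠ y → Relation.ReflTransGen (P.erase y).Adj u v) ∧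
    (v = y → ∀ z, P.Adj z y → Relation.ReflTransGen (P.erase y).Adj u z) := by
  induction h with
  | refl => exact ⟨fun _ => .refl, fun hv => absurd hv hu⟩
  | @tail w v h1 h2 ih =>
    constructor
    · intro hvy
      by_cases hwy : w = y
      · exact ih.2 hwy v (adj_symm (hwy ▸ h2))
      · refine (ih.1 hwy).tail ⟨h2, ?_⟩
        rw [Sym2.mem_iff]
        rintro (rfl | rfl)
        · exact hwy rfl
        · exact hvy rfl
    · intro hvy z hz
      have hwy : w ≠ y := fun hh => adj_ne h2 (hh.trans hvy.symm)
      have he : s(w, v) = s(z, y) :=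
        edge_unique_of_deg_le_one hdeg h2 (hvy ▸ Sym2.mem_mk_right w v) hz
          (Sym2.mem_mk_right z y)
      rw [Sym2.eq_iff] at he
      rcases he with ⟨rfl, rfl⟩ | ⟨rfl, rfl⟩
      · exact ih.1 hwy
      · exact absurd rfl hwy

end GraftGraph
namespace GraftGraph

variable {V : Type*} [Fintype V]

set_option linter.unusedSectionVars false

open scoped Classical

lemma deg_zero_of_not_mem {P : GraftGraph V} {v : V} (hv : v ∉ P.verts) : P.deg v = 0 := by
  have hset : {e ∈ P.edges | v ∈ e} = ∅ := by
    ext e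
    simp only [Set.mem_setOf_eq, Set.mem_empty_iff_false, iff_false, not_and]
    intro he hv2
    exact absurd (P.mem_verts e he v hv2) hv
  rw [deg_def, hset, Set.ncard_empty]

lemma eq_of_rtg_no_edges {P : GraftGraph V} (hE : P.edges = ∅) {u v : V}
    (h : Relation.ReflTransGen P.Adj u v) : u = v := by
  induction h with
  | refl => rfl
  | tail _ h2 ih => exact absurd h2 (by simp [Adj, hE])

lemma deg_erase_le {P : GraftGraph V} {y v : V} (hvy : v ≠ y) :
    (P.erase y).deg v ≤ P.deg v := by
  have := deg_erase (P := P) (y := y) hvy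
  split_ifs at this <;> omega

lemma isPathBetween_self_aux : ∀ (n : ℕ) (P : GraftGraph V) (x : V), P.edges.ncard = n →
    P.IsPathBetween x x → P.verts = {x} ∧ P.edges = ∅ := by
  intro n
  induction n using Nat.strong_induction_on with
  | _ n ih =>
    intro P x hn h
    obtain ⟨⟨hconn, hdeg2, -⟩, hx, -, hends⟩ := h
    by_cases hE : P.edges = ∅
    · refine ⟨Set.eq_singleton_iff_unique_mem.2 ⟨hx, ?_⟩, hE⟩
      intro v hv
      exact (eq_of_rtg_no_edges hE (hconn.2 x hx v hv)).symm
    · exfalso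
      obtain ⟨e, he⟩ := Set.nonempty_iff_ne_empty.2 hE
      have hdx : P.deg x ≤ 1 := (hends x hx).2 (Or.inl rfl)
      -- there is a vertex different from x
      have hune : ∃ u ∈ P.verts, u ≠ x := by
        induction e using Sym2.ind with
        | _ a b =>
          have hab : a ≠ b := fun hh => P.not_isDiag _ he (by simp [hh])
          by_cases hax : a = x
          · exact ⟨b, P.mem_verts _ he b (Sym2.mem_mk_right a b), fun hh => hab (hax.trans hh.symm)⟩
          · exact ⟨a, P.mem_verts _ he a (Sym2.mem_mk_left a b), hax⟩
      obtain ⟨u, hu, hux⟩ := hune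
      have hdx1 : 1 ≤ P.deg x := deg_pos_of_connected hconn hu hx hux
      obtain ⟨e0, he0⟩ : {e ∈ P.edges | x ∈ e}.Nonempty := by
        rw [← Set.ncard_pos (Set.toFinite _), ← deg_def]
        exact hdx1
      obtain ⟨he0E, hxe0⟩ := he0
      obtain ⟨z, rfl⟩ : ∃ z, e0 = s(x, z) := ⟨Sym2.Mem.other hxe0, (Sym2.other_spec hxe0).symm⟩
      have hzx : z ≠ x := fun hh => P.not_isDiag _ he0E (by simp [hh])
      have hzmem : z ∈ P.verts := P.mem_verts _ he0E z (Sym2.mem_mk_right x z)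
      have hzxE : s(z, x) ∈ P.edges := by rw [Sym2.eq_swap]; exact he0E
      -- unique edge at x
      have huniq : ∀ e' ∈ P.edges, x ∈ e' → e' = s(z, x) :=
        fun e' he' hxe' => edge_unique_of_deg_le_one hdx he' hxe' hzxE (Sym2.mem_mk_right z x)
      have hQconn : (P.erase x).Connected := by
        refine ⟨⟨z, hzmem, hzx⟩, ?_⟩
        intro a ha b hb
        exact (erase_connects hdx (hconn.2 a ha.1 b hb.1) (by simpa using ha.2)).1
          (by simpa using hb.2)
      have hdegz : P.deg z = 2 := by
        have h1 : ¬ P.deg z ≤ 1 := by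
          intro hh
          rcases (hends z hzmem).1 hh with rfl | rfl
          · exact hzx rfl
          · exact hzx rfl
        have h2 := hdeg2 z hzmem
        omega
      have hQdegz : (P.erase x).deg z = 1 := by
        have := deg_erase (P := P) (y := x) hzx
        rw [if_pos hzxE] at this
        omega
      have hQpath : (P.erase x).IsPathBetween z z := by
        refine ⟨⟨hQconn, ?_, ⟨z, ⟨hzmem, by simpa using hzx⟩, by omega⟩⟩,
          ⟨hzmem, by simpa using hzx⟩, ⟨hzmem, by simpa using hzx⟩, ?_⟩
        · intro v hv
          exact le_trans (deg_erase_le (by simpa using hv.2)) (hdeg2 v hv.1)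
        · intro v hv
          have hvx : v ≠ x := by simpa using hv.2
          constructor
          · intro hdv
            by_contra hvz
            have hvz' : v ≠ z := fun hh => hvz (Or.inl hh)
            have : s(v, x) ∉ P.edges := by
              intro hh
              have := huniq _ hh (Sym2.mem_mk_right v x)
              rw [Sym2.eq_iff] at this
              rcases this with ⟨rfl, -⟩ | ⟨rfl, -⟩
              · exact hvz' rfl
              · exact hvx rfl
            have hdd := deg_erase (P := P) (y := x) hvx
            rw [if_neg this] at hdd
            have h1 : ¬ P.deg v ≤ 1 := by
              intro hh
              rcases (hends v hv.1).1 hh with rfl | rfl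
              · exact hvx rfl
              · exact hvx rfl
            omega
          · rintro (rfl | rfl) <;> omega
      have hlt : (P.erase x).edges.ncard < n := by
        rw [← hn]
        apply Set.ncard_lt_ncard _ (Set.toFinite _)
        constructor
        · exact fun e' he' => he'.1
        · intro hsub
          have := (hsub hzxE).2
          simp at this
      obtain ⟨-, hQE⟩ := ih _ hlt (P.erase x) z rfl hQpath
      rw [deg_def, hQE] at hQdegz
      simp at hQdegz

lemma isPathBetween_self {P : GraftGraph V} {x : V} (h : P.IsPathBetween x x) :
    P.verts = {x} ∧ P.edges = ∅ :=
  isPathBetween_self_aux _ P x rfl h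

end GraftGraph
namespace GraftGraph

variable {V : Type*} [Fintype V]

set_option linter.unusedSectionVars false

open scoped Classical

lemma single_isPathBetween (r : V) : (single r).IsPathBetween r r := by
  have hdeg : ∀ v, (single r).deg v = 0 := by
    intro v
    have : {e ∈ (single r).edges | v ∈ e} = ∅ := by
      ext e; simp [single]
    rw [deg_def, this, Set.ncard_empty]
  have hconn : (single r).Connected := by
    refine ⟨⟨r, rfl⟩, ?_⟩
    intro u hu v hv
    have hu' : u = r := hu
    have hv' : v = r := hv
    subst hu'; subst hv'
    exact .refl
  exact ⟨⟨hconn, fun v _ => by rw [hdeg]; omega, ⟨r, rfl, by rw [hdeg]; omega⟩⟩,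
    rfl, rfl, fun v hv => by have hv' : v = r := hv; simp [hv', hdeg]⟩

lemma single_isSubgraph {P : GraftGraph V} {r : V} (hr : r ∈ P.verts) :
    (single r).IsSubgraph P :=
  ⟨by intro v hv; have hv' : v = r := hv; exact hv' ▸ hr,
   by intro e he; exact absurd he (Set.notMem_empty e)⟩

lemma erase_isSubgraph (P : GraftGraph V) (y : V) : (P.erase y).IsSubgraph P :=
  ⟨fun v hv => hv.1, fun e he => he.1⟩

/-- Peel the end `y` off a path from `x` to `y`. -/
lemma peel {P : GraftGraph V} {x y : V} (h : P.IsPathBetween x y) (hxy : x ≠ y) :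
    ∃ z, z ≠ y ∧ s(z, y) ∈ P.edges ∧ (P.erase y).IsPathBetween x z ∧
      P.edges = insert (s(z,y)) (P.erase y).edges ∧ s(z,y) ∉ (P.erase y).edges := by
  obtain ⟨⟨hconn, hdeg2, -⟩, hx, hy, hends⟩ := h
  have hdy : P.deg y ≤ 1 := (hends y hy).2 (Or.inr rfl)
  have hdy1 : 1 ≤ P.deg y := deg_pos_of_connected hconn hx hy hxy
  obtain ⟨e0, he0⟩ : {e ∈ P.edges | y ∈ e}.Nonempty := by
    rw [← Set.ncard_pos (Set.toFinite _), ← deg_def]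
    exact hdy1
  obtain ⟨he0E, hye0⟩ := he0
  obtain ⟨z, rfl⟩ : ∃ z, e0 = s(y, z) := ⟨Sym2.Mem.other hye0, (Sym2.other_spec hye0).symm⟩
  have hzy : z ≠ y := fun hh => P.not_isDiag _ he0E (by simp [hh])
  have hzmem : z ∈ P.verts := P.mem_verts _ he0E z (Sym2.mem_mk_right y z)
  have hzyE : s(z, y) ∈ P.edges := by rw [Sym2.eq_swap]; exact he0E
  have huniq : ∀ e' ∈ P.edges, y ∈ e' → e' = s(z, y) :=
    fun e' he' hye' => edge_unique_of_deg_le_one hdy he' hye' hzyE (Sym2.mem_mk_right z y)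
  have hnotzy : s(z, y) ∉ (P.erase y).edges := fun hh => hh.2 (Sym2.mem_mk_right z y)
  refine ⟨z, hzy, hzyE, ?_, ?_, hnotzy⟩
  · -- (P.erase y).IsPathBetween x z
    have hxv : x ∈ (P.erase y).verts := ⟨hx, by simpa using hxy⟩
    have hzv : z ∈ (P.erase y).verts := ⟨hzmem, by simpa using hzy⟩
    have hQconn : (P.erase y).Connected := by
      refine ⟨⟨x, hxv⟩, ?_⟩
      intro a ha b hb
      exact (erase_connects hdy (hconn.2 a ha.1 b hb.1) (by simpa using ha.2)).1
        (by simpa using hb.2)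
    have hQdegz : (P.erase y).deg z ≤ 1 := by
      have hdd := deg_erase (P := P) (y := y) hzy
      rw [if_pos hzyE] at hdd
      have := hdeg2 z hzmem
      omega
    refine ⟨⟨hQconn, ?_, ⟨z, hzv, by omega⟩⟩, hxv, hzv, ?_⟩
    · intro v hv
      exact le_trans (deg_erase_le (by simpa using hv.2)) (hdeg2 v hv.1)
    · intro v hv
      have hvy : v ≠ y := by simpa using hv.2
      constructor
      · intro hdv
        by_cases hsvy : s(v, y) ∈ P.edges
        · right
          have := huniq _ hsvy (Sym2.mem_mk_right v y)
          rw [Sym2.eq_iff] at this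
          rcases this with ⟨rfl, -⟩ | ⟨rfl, -⟩
          · rfl
          · exact absurd rfl hvy
        · have hdd := deg_erase (P := P) (y := y) hvy
          rw [if_neg hsvy] at hdd
          rcases (hends v hv.1).1 (by omega) with rfl | rfl
          · exact Or.inl rfl
          · exact absurd rfl hvy
      · rintro (rfl | rfl)
        · exact le_trans (deg_erase_le hvy) ((hends v hv.1).2 (Or.inl rfl))
        · exact hQdegz
  · ext e
    simp only [Set.mem_insert_iff, erase_edges, Set.mem_setOf_eq]
    constructor
    · intro he
      by_cases hye : y ∈ e
      · exact Or.inl (huniq e he hye)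
      · exact Or.inr ⟨he, hye⟩
    · rintro (rfl | ⟨he, -⟩)
      · exact hzyE
      · exact he

/-- Attach a pendant edge from `y` to a new vertex `b`. -/
def addLeaf (P : GraftGraph V) {y b : V} (hy : y ∈ P.verts) (hb : b ∉ P.verts) : GraftGraph V where
  verts := insert b P.verts
  edges := insert s(y, b) P.edges
  not_isDiag := by
    rintro e (rfl | he)
    · rw [Sym2.mk_isDiag_iff]
      exact fun hh => hb (hh ▸ hy)
    · exact P.not_isDiag e he
  mem_verts := by
    rintro e (rfl | he) v hv
    · rw [Sym2.mem_iff] at hv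
      rcases hv with rfl | rfl
      · exact Set.mem_insert_of_mem _ hy
      · exact Set.mem_insert _ _
    · exact Set.mem_insert_of_mem _ (P.mem_verts e he v hv)

lemma addLeaf_verts (P : GraftGraph V) {y b : V} (hy : y ∈ P.verts) (hb : b ∉ P.verts) :
    (P.addLeaf hy hb).verts = insert b P.verts := rfl

lemma addLeaf_edges (P : GraftGraph V) {y b : V} (hy : y ∈ P.verts) (hb : b ∉ P.verts) :
    (P.addLeaf hy hb).edges = insert s(y, b) P.edges := rfl

lemma addLeaf_edge_not_mem {P : GraftGraph V} {y b : V} (hb : b ∉ P.verts) :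
    s(y, b) ∉ P.edges :=
  fun hh => hb (P.mem_verts _ hh b (Sym2.mem_mk_right y b))

lemma addLeaf_deg (P : GraftGraph V) {y b : V} (hy : y ∈ P.verts) (hb : b ∉ P.verts) (v : V) :
    (P.addLeaf hy hb).deg v = P.deg v + (if v = y ∨ v = b then 1 else 0) := by
  have hsplit : {e ∈ (P.addLeaf hy hb).edges | v ∈ e} =
      {e ∈ P.edges | v ∈ e} ∪ ({s(y, b)} ∩ {e | v ∈ e}) := by
    ext e
    simp only [addLeaf_edges, Set.mem_insert_iff, Set.mem_setOf_eq, Set.mem_union,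
      Set.mem_inter_iff, Set.mem_singleton_iff]
    tauto
  rw [deg_def, hsplit, Set.ncard_union_eq ?_ (Set.toFinite _) (Set.toFinite _), deg_def]
  · congr 1
    by_cases hv : v = y ∨ v = b
    · rw [if_pos hv]
      have : ({s(y, b)} : Set (Sym2 V)) ∩ {e | v ∈ e} = {s(y, b)} := by
        apply Set.inter_eq_left.2
        intro e he
        rw [Set.mem_singleton_iff] at he
        subst he
        rw [Set.mem_setOf_eq, Sym2.mem_iff]
        tauto
      rw [this, Set.ncard_singleton]
    · rw [if_neg hv]
      have : ({s(y, b)} : Set (Sym2 V)) ∩ {e | v ∈ e} = ∅ := by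
        ext e
        simp only [Set.mem_inter_iff, Set.mem_singleton_iff, Set.mem_setOf_eq,
          Set.mem_empty_iff_false, iff_false, not_and]
        rintro rfl
        rw [Sym2.mem_iff]
        tauto
      rw [this, Set.ncard_empty]
  · rw [Set.disjoint_left]
    rintro e ⟨he, -⟩ ⟨rfl, -⟩
    exact addLeaf_edge_not_mem hb he

lemma addLeaf_isPathBetween {P : GraftGraph V} {x y b : V} (h : P.IsPathBetween x y)
    (hb : b ∉ P.verts) :
    (P.addLeaf h.2.2.1 hb).IsPathBetween x b := by
  obtain ⟨⟨hconn, hdeg2, -⟩, hx, hy, hends⟩ := h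
  set Q := P.addLeaf hy hb with hQdef
  have hyb : y ≠ b := fun hh => hb (hh ▸ hy)
  have hmono : ∀ u v, P.Adj u v → Q.Adj u v := by
    intro u v huv
    exact Set.mem_insert_of_mem _ huv
  have hQconn : Q.Connected := by
    refine ⟨⟨b, Set.mem_insert _ _⟩, ?_⟩
    have hyb' : Relation.ReflTransGen Q.Adj y b :=
      Relation.ReflTransGen.single (Set.mem_insert _ _)
    intro u hu v hv
    rcases hu with rfl | hu <;> rcases hv with rfl | hv
    · exact .refl
    · -- from b to v
      refine Relation.ReflTransGen.trans ?_ (Relation.ReflTransGen.mono hmono _ _ (hconn.2 y hy v hv))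
      exact Relation.ReflTransGen.single (adj_symm (Set.mem_insert _ _))
    · exact Relation.ReflTransGen.trans (Relation.ReflTransGen.mono hmono _ _ (hconn.2 u hu y hy)) hyb'
    · exact Relation.ReflTransGen.mono hmono _ _ (hconn.2 u hu v hv)
  have hcase : (P.verts = {x} ∧ P.edges = ∅ ∧ x = y) ∨ x ≠ y := by
    by_cases hxy : x = y
    · subst hxy
      obtain ⟨h1, h2⟩ := isPathBetween_self ⟨⟨hconn, hdeg2, ⟨x, hx, by
        have := (hends x hx).2 (Or.inl rfl); omega⟩⟩, hx, hy, hends⟩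
      exact Or.inl ⟨h1, h2, rfl⟩
    · exact Or.inr hxy
  have hdegb : Q.deg b = 1 := by
    rw [addLeaf_deg, deg_zero_of_not_mem hb, if_pos (Or.inr rfl)]
  refine ⟨⟨hQconn, ?_, ⟨b, Set.mem_insert _ _, by omega⟩⟩,
    Set.mem_insert_of_mem _ hx, Set.mem_insert _ _, ?_⟩
  · intro v hv
    rcases hv with rfl | hv
    · omega
    · rw [addLeaf_deg]
      rcases hcase with ⟨h1, h2, rfl⟩ | hxy
      · have : P.deg v ≤ 1 := (hends v hv).2 (Or.inl (by rw [h1] at hv; simpa using hv))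
        split_ifs <;> omega
      · by_cases hvy : v = y
        · subst hvy
          have : P.deg v ≤ 1 := (hends v hv).2 (Or.inr rfl)
          split_ifs <;> omega
        · have h2 : P.deg v ≤ 2 := hdeg2 v hv
          have hvb : v ≠ b := fun hh => hb (hh ▸ hv)
          rw [if_neg (by tauto)]
          omega
  · intro v hv
    rcases hv with rfl | hv
    · simp [hdegb]
    · have hvb : v ≠ b := fun hh => hb (hh ▸ hv)
      rw [addLeaf_deg]
      rcases hcase with ⟨h1, h2, rfl⟩ | hxy
      · have hvx : v = x := by rw [h1] at hv; simpa using hv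
        subst hvx
        have : P.deg v = 0 := by
          rw [deg_def, h2]
          simp [Set.ncard_empty]
        rw [this, if_pos (Or.inl rfl)]
        simp
      · by_cases hvy : v = y
        · subst hvy
          have h1 : 1 ≤ P.deg v := deg_pos_of_connected hconn hx hy hxy
          rw [if_pos (Or.inl rfl)]
          constructor
          · intro hh
            omega
          · rintro (rfl | rfl)
            · exact absurd rfl hxy
            · exact absurd rfl hvb
        · rw [if_neg (by tauto)]
          simp only [Nat.add_zero]
          rw [hends v hv]
          constructor
          · rintro (rfl | rfl)
            · exact Or.inl rfl
            · exact absurd rfl hvy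
          · rintro (rfl | rfl)
            · exact Or.inl rfl
            · exact absurd rfl hvb

end GraftGraph
namespace GraftGraph

variable {V : Type*} [Fintype V]

set_option linter.unusedSectionVars false

open scoped Classical

lemma split_at_aux : ∀ (n : ℕ) (P : GraftGraph V) (x y v : V), P.edges.ncard = n →
    P.IsPathBetween x y → v ∈ P.verts →
    ∃ P1 P2 : GraftGraph V, P1.IsPathBetween x v ∧ P2.IsPathBetween v y ∧
      P1.IsSubgraph P ∧ P2.IsSubgraph P ∧
      P.edges = P1.edges ∪ P2.edges ∧ Disjoint P1.edges P2.edges := by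
  intro n
  induction n using Nat.strong_induction_on with
  | _ n ih =>
    intro P x y v hn h hv
    by_cases hvy : v = y
    · subst hvy
      refine ⟨P, single v, h, single_isPathBetween v, ⟨subset_rfl, subset_rfl⟩,
        single_isSubgraph hv, by simp [single], ?_⟩
      show Disjoint P.edges (∅ : Set (Sym2 V))
      exact disjoint_bot_right
    · have hxy : x ≠ y := by
        rintro rfl
        obtain ⟨h1, -⟩ := isPathBetween_self h
        rw [h1] at hv
        exact hvy (by simpa using hv)
      obtain ⟨z, hzy, hzyE, hQpath, hedges, hznot⟩ := peel h hxy
      have hvQ : v ∈ (P.erase y).verts := ⟨hv, by simpa using hvy⟩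
      have hlt : (P.erase y).edges.ncard < n := by
        rw [← hn, hedges, Set.ncard_insert_of_notMem hznot (Set.toFinite _)]
        omega
      obtain ⟨P1, P2', h1, h2', hs1, hs2', hedq, hdisj⟩ :=
        ih _ hlt (P.erase y) x z v rfl hQpath hvQ
      have hynot : y ∉ P2'.verts := fun hh => by
        have := hs2'.1 hh
        rw [erase_verts] at this
        simp at this
      refine ⟨P1, P2'.addLeaf h2'.2.2.1 hynot, h1, addLeaf_isPathBetween h2' hynot,
        ⟨hs1.1.trans (erase_isSubgraph P y).1, hs1.2.trans (erase_isSubgraph P y).2⟩,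
        ?_, ?_, ?_⟩
    -- subgraph
      · constructor
        · intro w hw
          rcases hw with rfl | hw
          · exact h.2.2.1
          · exact (erase_isSubgraph P y).1 (hs2'.1 hw)
        · intro e he
          rcases he with rfl | he
          · exact hzyE
          · exact (erase_isSubgraph P y).2 (hs2'.2 he)
      · rw [hedges, hedq, addLeaf_edges]
        ext e
        simp only [Set.mem_insert_iff, Set.mem_union]
        tauto
      · rw [Set.disjoint_left]
        intro e he1 he2
        rcases he2 with rfl | he2
        · exact hznot (hedq ▸ Set.mem_union_left _ he1)
        · exact (Set.disjoint_left.1 hdisj) he1 he2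

lemma split_at {P : GraftGraph V} {x y v : V} (h : P.IsPathBetween x y) (hv : v ∈ P.verts) :
    ∃ P1 P2 : GraftGraph V, P1.IsPathBetween x v ∧ P2.IsPathBetween v y ∧
      P1.IsSubgraph P ∧ P2.IsSubgraph P ∧
      P.edges = P1.edges ∪ P2.edges ∧ Disjoint P1.edges P2.edges :=
  split_at_aux _ P x y v rfl h hv

end GraftGraph
namespace GraftGraph

variable {V : Type*} [Fintype V]

set_option linter.unusedSectionVars false

open scoped Classical

/-- weight of an edge set -/
noncomputable def wS (F : Set (Sym2 V)) (E : Set (Sym2 V)) : ℤ :=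
  ((E \ F).ncard : ℤ) - ((E ∩ F).ncard : ℤ)

lemma wF_eq_wS (F : Set (Sym2 V)) (H : GraftGraph V) : wF F H = wS F H.edges := rfl

lemma ncard_diff_add_inter (s t : Set (Sym2 V)) :
    (s \ t).ncard + (s ∩ t).ncard = s.ncard := by
  rw [← Set.ncard_union_eq ?_ (Set.toFinite _) (Set.toFinite _), Set.diff_union_inter]
  rw [Set.disjoint_left]
  rintro e ⟨-, he1⟩ ⟨-, he2⟩
  exact he1 he2

lemma wS_empty (F : Set (Sym2 V)) : wS F ∅ = 0 := by
  simp [wS]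

lemma wS_union {F E1 E2 : Set (Sym2 V)} (h : Disjoint E1 E2) :
    wS F (E1 ∪ E2) = wS F E1 + wS F E2 := by
  unfold wS
  rw [Set.union_diff_distrib, Set.union_inter_distrib_right,
    Set.ncard_union_eq (h.mono Set.diff_subset Set.diff_subset) (Set.toFinite _) (Set.toFinite _),
    Set.ncard_union_eq (h.mono Set.inter_subset_left Set.inter_subset_left)
      (Set.toFinite _) (Set.toFinite _)]
  push_cast
  ring

lemma wS_singleton (F : Set (Sym2 V)) (e : Sym2 V) :
    wS F {e} = if e ∈ F then -1 else 1 := by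
  unfold wS
  split_ifs with h
  · rw [Set.diff_eq_empty.2 (by simpa using h), Set.inter_eq_left.2 (by simpa using h)]
    simp
  · have hd : ({e} : Set (Sym2 V)) \ F = {e} := by
      ext x
      simp only [Set.mem_diff, Set.mem_singleton_iff, and_iff_left_iff_imp]
      rintro rfl
      exact h
    have hi : ({e} : Set (Sym2 V)) ∩ F = ∅ := by
      ext x
      simp only [Set.mem_inter_iff, Set.mem_singleton_iff, Set.mem_empty_iff_false, iff_false,
        not_and]
      rintro rfl
      exact h
    rw [hd, hi]
    simp

lemma wS_insert {F E : Set (Sym2 V)} {e : Sym2 V} (he : e ∉ E) :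
    wS F (insert e E) = wS F E + (if e ∈ F then -1 else 1) := by
  rw [Set.insert_eq, wS_union (by simpa using he), wS_singleton]
  ring

lemma wS_lower {G : GraftGraph V} {F E : Set (Sym2 V)} (hE : E ⊆ G.edges) :
    -(G.edges.ncard : ℤ) ≤ wS F E := by
  unfold wS
  have h1 : (E ∩ F).ncard ≤ G.edges.ncard :=
    Set.ncard_le_ncard (fun e he => hE he.1) (Set.toFinite _)
  have h2 : (0 : ℤ) ≤ ((E \ F).ncard : ℤ) := Int.ofNat_nonneg _
  omega

lemma distF_bddBelow (G : GraftGraph V) (F : Set (Sym2 V)) (u v : V) :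
    BddBelow {w : ℤ | ∃ P : GraftGraph V, P.IsSubgraph G ∧ P.IsPathBetween u v ∧ wF F P = w} := by
  refine ⟨-(G.edges.ncard : ℤ), ?_⟩
  rintro w ⟨P, hP, -, rfl⟩
  exact wS_lower hP.2

lemma distF_le {G P : GraftGraph V} {F : Set (Sym2 V)} {u v : V}
    (hs : P.IsSubgraph G) (hp : P.IsPathBetween u v) : G.distF F u v ≤ wF F P :=
  csInf_le (distF_bddBelow G F u v) ⟨P, hs, hp, rfl⟩

lemma distF_attained {G : GraftGraph V} {F : Set (Sym2 V)} {u v : V} {d : ℤ}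
    (h : G.distF F u v = d) (hd : d ≠ 0) :
    ∃ P : GraftGraph V, P.IsSubgraph G ∧ P.IsPathBetween u v ∧ wF F P = d := by
  set S := {w : ℤ | ∃ P : GraftGraph V, P.IsSubgraph G ∧ P.IsPathBetween u v ∧ wF F P = w} with hS
  have hne : S.Nonempty := by
    by_contra hne
    rw [Set.not_nonempty_iff_eq_empty] at hne
    have : G.distF F u v = 0 := by
      unfold distF
      rw [← hS, hne, Int.csInf_empty]
    exact hd (by rw [← h, this])
  have : sInf S ∈ S := Int.csInf_mem hne (distF_bddBelow G F u v)
  rw [show sInf S = G.distF F u v from rfl, h] at this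
  exact this

lemma nu_le_of_isJoin {G : GraftGraph V} {T : Set V} {F' : Set (Sym2 V)} (h : G.IsJoin T F') :
    G.nu T ≤ F'.ncard :=
  Nat.sInf_le ⟨F', h, rfl⟩

lemma isJoin_symmDiff {G : GraftGraph V} {T : Set V} {F C : Set (Sym2 V)} (hF : G.IsJoin T F)
    (hC : C ⊆ G.edges) (heven : ∀ v, Even {e ∈ C | v ∈ e}.ncard) :
    G.IsJoin T ((F \ C) ∪ (C \ F)) := by
  constructor
  · rintro e (he | he)
    · exact hF.1 he.1
    · exact hC he.1
  · intro v
    have hIv : {e ∈ (F \ C) ∪ (C \ F) | v ∈ e} =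
        ({e ∈ F | v ∈ e} \ {e ∈ C | v ∈ e}) ∪ ({e ∈ C | v ∈ e} \ {e ∈ F | v ∈ e}) := by
      ext e
      simp only [Set.mem_setOf_eq, Set.mem_union, Set.mem_diff]
      tauto
    have hdisj : Disjoint ({e ∈ F | v ∈ e} \ {e ∈ C | v ∈ e})
        ({e ∈ C | v ∈ e} \ {e ∈ F | v ∈ e}) := by
      rw [Set.disjoint_left]
      rintro e ⟨he1, -⟩ ⟨-, he2⟩
      exact he2 he1
    have h1 : ({e ∈ F | v ∈ e} \ {e ∈ C | v ∈ e}).ncard + ({e ∈ F | v ∈ e} ∩ {e ∈ C | v ∈ e}).ncard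
        = {e ∈ F | v ∈ e}.ncard := ncard_diff_add_inter _ _
    have h2 : ({e ∈ C | v ∈ e} \ {e ∈ F | v ∈ e}).ncard + ({e ∈ C | v ∈ e} ∩ {e ∈ F | v ∈ e}).ncard
        = {e ∈ C | v ∈ e}.ncard := ncard_diff_add_inter _ _
    have h3 : ({e ∈ F | v ∈ e} ∩ {e ∈ C | v ∈ e}).ncard = ({e ∈ C | v ∈ e} ∩ {e ∈ F | v ∈ e}).ncard := by
      rw [Set.inter_comm]
    rw [hIv, Set.ncard_union_eq hdisj (Set.toFinite _) (Set.toFinite _)]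
    rw [← hF.2 v]
    have hCv := heven v
    rw [Nat.even_iff] at hCv
    rw [Nat.odd_iff, Nat.odd_iff]
    omega

lemma ncard_symmDiff {F C : Set (Sym2 V)} :
    (((F \ C) ∪ (C \ F)).ncard : ℤ) = (F.ncard : ℤ) + wS F C := by
  have hdisj : Disjoint (F \ C) (C \ F) := by
    rw [Set.disjoint_left]
    rintro e ⟨he1, -⟩ ⟨-, he2⟩
    exact he2 he1
  rw [Set.ncard_union_eq hdisj (Set.toFinite _) (Set.toFinite _)]
  have h1 : (F \ C).ncard + (F ∩ C).ncard = F.ncard := ncard_diff_add_inter _ _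
  have h2 : (C \ F).ncard + (C ∩ F).ncard = C.ncard := ncard_diff_add_inter _ _
  unfold wS
  have h3 : (F ∩ C).ncard = (C ∩ F).ncard := by rw [Set.inter_comm]
  omega

end GraftGraph
namespace GraftGraph

variable {V : Type*} [Fintype V]

set_option linter.unusedSectionVars false

open scoped Classical

lemma inc_insert {E : Set (Sym2 V)} {e : Sym2 V} (he : e ∉ E) (v : V) :
    {x ∈ insert e E | v ∈ x}.ncard = {x ∈ E | v ∈ x}.ncard + (if v ∈ e then 1 else 0) := by
  have hsplit : {x ∈ insert e E | v ∈ x} = {x ∈ E | v ∈ x} ∪ ({e} ∩ {x | v ∈ x}) := by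
    ext x
    simp only [Set.mem_insert_iff, Set.mem_setOf_eq, Set.mem_union, Set.mem_inter_iff,
      Set.mem_singleton_iff]
    tauto
  rw [hsplit, Set.ncard_union_eq ?_ (Set.toFinite _) (Set.toFinite _)]
  · congr 1
    by_cases hv : v ∈ e
    · rw [if_pos hv]
      have : ({e} : Set (Sym2 V)) ∩ {x | v ∈ x} = {e} := by
        apply Set.inter_eq_left.2
        intro x hx
        rw [Set.mem_singleton_iff] at hx
        subst hx
        exact hv
      rw [this, Set.ncard_singleton]
    · rw [if_neg hv]
      have : ({e} : Set (Sym2 V)) ∩ {x | v ∈ x} = ∅ := by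
        ext x
        simp only [Set.mem_inter_iff, Set.mem_singleton_iff, Set.mem_setOf_eq,
          Set.mem_empty_iff_false, iff_false, not_and]
        rintro rfl
        exact hv
      rw [this, Set.ncard_empty]
  · rw [Set.disjoint_left]
    rintro x ⟨hx, -⟩ ⟨rfl, -⟩
    exact he hx

end GraftGraph

/-- Let `(G,T;A,B)` be a bipartite graft with `G` connected, let
`r ∈ A`, and let `F` be a minimum join of `(G,T)`. If `dist_F(r,v) = 0` for
every `v ∈ A` and `dist_F(r,v) = −1` for every `v ∈ B`, then `(G,T;A,B)` is a
comb. -/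
theorem statement6 {V : Type*} [Fintype V] (G : GraftGraph V) (T A B : Set V)
    (hbip : G.IsBipartiteGraft T A B) (hconn : G.Connected)
    (r : V) (hr : r ∈ A) (F : Set (Sym2 V)) (hmin : G.IsMinJoin T F)
    (hA : ∀ v ∈ A, G.distF F r v = 0) (hB : ∀ v ∈ B, G.distF F r v = -1) :
    G.IsComb T A B := by
  classical
  obtain ⟨hgraft, hdisj, hunion, hedge⟩ := hbip
  obtain ⟨hjoin, hcard⟩ := hmin
  have hother : ∀ e ∈ G.edges, ∀ b ∈ B, b ∈ e → ∃ a ∈ A, e = s(a, b) := by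
    intro e he b hbB hbe
    obtain ⟨a, haA, b', hb'B, rfl⟩ := hedge e he
    rw [Sym2.mem_iff] at hbe
    rcases hbe with rfl | rfl
    · exact absurd hbB (Set.disjoint_left.1 hdisj haA)
    · exact ⟨a, haA, rfl⟩
  -- Key claim: every vertex of B lies in T and has a unique incident edge of F.
  have key : ∀ b ∈ B, ∃ e ∈ F, b ∈ e ∧ b ∈ T ∧ ∀ e' ∈ F, b ∈ e' → e' = e := by
    intro b hbB
    obtain ⟨P, hPsub, hPpath, hPw⟩ := GraftGraph.distF_attained (hB b hbB) (by norm_num)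
    have hrb : r ≠ b := fun hh => Set.disjoint_left.1 hdisj hr (hh ▸ hbB)
    obtain ⟨z, hzb, hzbE, hQpath, hedges, hznot⟩ := GraftGraph.peel hPpath hrb
    have hzA : z ∈ A := by
      obtain ⟨a, haA, he⟩ := hother _ (hPsub.2 hzbE) b hbB (Sym2.mem_mk_right z b)
      rw [Sym2.eq_iff] at he
      rcases he with ⟨rfl, -⟩ | ⟨rfl, rfl⟩
      · exact haA
      · exact absurd rfl hzb
    have hwdec : GraftGraph.wF F P = GraftGraph.wF F (P.erase b) + (if s(z,b) ∈ F then -1 else 1) := by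
      rw [GraftGraph.wF_eq_wS, GraftGraph.wF_eq_wS, hedges, GraftGraph.wS_insert hznot]
    have hQsub : (P.erase b).IsSubgraph G :=
      ⟨(GraftGraph.erase_isSubgraph P b).1.trans hPsub.1, (GraftGraph.erase_isSubgraph P b).2.trans hPsub.2⟩
    have hQw : 0 ≤ GraftGraph.wF F (P.erase b) := by
      have hle := GraftGraph.distF_le (F := F) hQsub hQpath
      rw [hA z hzA] at hle
      exact hle
    have he1F : s(z, b) ∈ F := by
      by_contra hne
      rw [if_neg hne, hPw] at hwdec
      omega
    have huniq : ∀ e' ∈ F, b ∈ e' → e' = s(z, b) := by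
      intro e2 he2F hbe2
      by_contra hne
      obtain ⟨a2, ha2A, rfl⟩ := hother _ (hjoin.1 he2F) b hbB hbe2
      have ha2b : a2 ≠ b := fun hh => Set.disjoint_left.1 hdisj (hh ▸ ha2A) hbB
      have he2notP : s(a2, b) ∉ P.edges := by
        rw [hedges]
        rintro (heq | hmem)
        · exact hne heq
        · exact hmem.2 hbe2
      by_cases ha2P : a2 ∈ P.verts
      · -- negative circuit: swap along it to get a smaller join
        obtain ⟨P1, P2, hP1, hP2, hs1, hs2, hEsplit, hEdisj⟩ := GraftGraph.split_at hPpath ha2P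
        have hw12 : GraftGraph.wF F P = GraftGraph.wF F P1 + GraftGraph.wF F P2 := by
          rw [GraftGraph.wF_eq_wS, GraftGraph.wF_eq_wS, GraftGraph.wF_eq_wS, hEsplit, GraftGraph.wS_union hEdisj]
        have hw1 : 0 ≤ GraftGraph.wF F P1 := by
          have hle := GraftGraph.distF_le (F := F)
            ⟨hs1.1.trans hPsub.1, hs1.2.trans hPsub.2⟩ hP1
          rw [hA a2 ha2A] at hle
          exact hle
        have he2notP2 : s(a2, b) ∉ P2.edges := fun hh =>
          he2notP (hEsplit ▸ Set.mem_union_right _ hh)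
        have hCsub : insert (s(a2,b)) P2.edges ⊆ G.edges := by
          rintro e (rfl | he)
          · exact hjoin.1 he2F
          · exact hPsub.2 (hs2.2 he)
        have hwC : GraftGraph.wS F (insert (s(a2,b)) P2.edges) = GraftGraph.wF F P2 + (-1) := by
          rw [GraftGraph.wS_insert he2notP2, if_pos he2F, GraftGraph.wF_eq_wS]
        have heven : ∀ v, Even {e ∈ insert (s(a2,b)) P2.edges | v ∈ e}.ncard := by
          intro v
          rw [GraftGraph.inc_insert he2notP2, ← GraftGraph.deg_def]
          by_cases hvP2 : v ∈ P2.verts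
          · by_cases hva : v = a2
            · subst hva
              have hd1 : P2.deg v ≤ 1 := (hP2.2.2.2 v hvP2).2 (Or.inl rfl)
              have hd2 : 1 ≤ P2.deg v :=
                GraftGraph.deg_pos_of_connected hP2.1.1 hP2.2.2.1 hvP2 (Ne.symm ha2b)
              rw [if_pos (Sym2.mem_mk_left v b)]
              refine ⟨1, by omega⟩
            · by_cases hvb : v = b
              · subst hvb
                have hd1 : P2.deg v ≤ 1 := (hP2.2.2.2 v hvP2).2 (Or.inr rfl)
                have hd2 : 1 ≤ P2.deg v :=
                  GraftGraph.deg_pos_of_connected hP2.1.1 hP2.2.1 hvP2 ha2b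
                rw [if_pos (Sym2.mem_mk_right a2 v)]
                refine ⟨1, by omega⟩
              · have hd2 : P2.deg v ≤ 2 := hP2.1.2.1 v hvP2
                have hd1 : ¬ P2.deg v ≤ 1 := by
                  intro hh
                  rcases (hP2.2.2.2 v hvP2).1 hh with rfl | rfl
                  · exact hva rfl
                  · exact hvb rfl
                rw [if_neg (by rw [Sym2.mem_iff]; tauto)]
                refine ⟨1, by omega⟩
          · have hd0 : P2.deg v = 0 := GraftGraph.deg_zero_of_not_mem hvP2
            rw [if_neg ?_, hd0]
            · exact ⟨0, rfl⟩
            · rw [Sym2.mem_iff]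
              rintro (rfl | rfl)
              · exact hvP2 hP2.2.1
              · exact hvP2 hP2.2.2.1
        have hjoin' := GraftGraph.isJoin_symmDiff hjoin hCsub heven
        have hnule := GraftGraph.nu_le_of_isJoin hjoin'
        have hcard' := GraftGraph.ncard_symmDiff (F := F) (C := insert (s(a2,b)) P2.edges)
        have hw2 : GraftGraph.wF F P2 ≤ -1 := by
          rw [hPw] at hw12
          omega
        have : (G.nu T : ℤ) ≤ (G.nu T : ℤ) + (GraftGraph.wF F P2 + (-1)) := by
          calc (G.nu T : ℤ) ≤ ((((F \ insert (s(a2,b)) P2.edges) ∪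
              (insert (s(a2,b)) P2.edges \ F)).ncard : ℕ) : ℤ) := by exact_mod_cast hnule
          _ = (F.ncard : ℤ) + GraftGraph.wS F (insert (s(a2,b)) P2.edges) := hcard'
          _ = (G.nu T : ℤ) + (GraftGraph.wF F P2 + (-1)) := by rw [hcard, hwC]
        omega
      · -- extend the path by the edge to get a too-short path to a2
        have ha2G : a2 ∈ G.verts := G.mem_verts _ (hjoin.1 he2F) a2 (Sym2.mem_mk_left a2 b)
        have hQ2 := GraftGraph.addLeaf_isPathBetween hPpath ha2P
        have hQ2sub : (P.addLeaf hPpath.2.2.1 ha2P).IsSubgraph G := by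
          constructor
          · rintro w (rfl | hw)
            · exact ha2G
            · exact hPsub.1 hw
          · rintro e (rfl | he)
            · rw [Sym2.eq_swap]
              exact hjoin.1 he2F
            · exact hPsub.2 he
        have hle := GraftGraph.distF_le (F := F) hQ2sub hQ2
        rw [hA a2 ha2A] at hle
        have hwQ2 : GraftGraph.wF F (P.addLeaf hPpath.2.2.1 ha2P) = -2 := by
          rw [GraftGraph.wF_eq_wS, GraftGraph.addLeaf_edges,
            GraftGraph.wS_insert (GraftGraph.addLeaf_edge_not_mem ha2P), if_pos (by rw [Sym2.eq_swap]; exact he2F),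
            ← GraftGraph.wF_eq_wS, hPw]
          norm_num
        rw [hwQ2] at hle
        omega
    refine ⟨s(z,b), he1F, Sym2.mem_mk_right z b, ?_, huniq⟩
    have hinc : {e ∈ F | b ∈ e} = {s(z,b)} := by
      ext e
      simp only [Set.mem_setOf_eq, Set.mem_singleton_iff]
      constructor
      · rintro ⟨heF, hbe⟩
        exact huniq e heF hbe
      · rintro rfl
        exact ⟨he1F, Sym2.mem_mk_right z b⟩
    rw [← hjoin.2 b, hinc, Set.ncard_singleton]
    exact ⟨0, rfl⟩
  -- Now count: F is in bijection with B.
  have hBuniq : ∀ e ∈ F, ∀ b1 ∈ B, ∀ b2 ∈ B, b1 ∈ e → b2 ∈ e → b1 = b2 := by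
    intro e heF b1 hb1 b2 hb2 hm1 hm2
    obtain ⟨a, haA, b', hb'B, rfl⟩ := hedge e (hjoin.1 heF)
    rw [Sym2.mem_iff] at hm1 hm2
    rcases hm1 with rfl | rfl
    · exact absurd hb1 (Set.disjoint_left.1 hdisj haA)
    · rcases hm2 with rfl | rfl
      · exact absurd hb2 (Set.disjoint_left.1 hdisj haA)
      · rfl
  have hexB : ∀ e ∈ F, ∃ b ∈ B, b ∈ e := by
    intro e heF
    obtain ⟨a, haA, b', hb'B, rfl⟩ := hedge e (hjoin.1 heF)
    exact ⟨b', hb'B, Sym2.mem_mk_right a b'⟩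
  set g : Sym2 V → V := fun e => if h : ∃ b ∈ B, b ∈ e then h.choose else r with hg
  have hgspec : ∀ e ∈ F, g e ∈ B ∧ g e ∈ e := by
    intro e heF
    have h := hexB e heF
    rw [hg]
    simp only [dif_pos h]
    exact ⟨h.choose_spec.1, h.choose_spec.2⟩
  have himg : g '' F = B := by
    apply Set.Subset.antisymm
    · rintro b ⟨e, heF, rfl⟩
      exact (hgspec e heF).1
    · intro b hbB
      obtain ⟨e, heF, hbe, -, -⟩ := key b hbB
      refine ⟨e, heF, ?_⟩
      exact hBuniq e heF (g e) (hgspec e heF).1 b hbB (hgspec e heF).2 hbe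
  have hinj : Set.InjOn g F := by
    intro e1 he1 e2 he2 heq
    obtain ⟨e, heF, hbe, -, huniq⟩ := key (g e1) (hgspec e1 he1).1
    have h1 : e1 = e := huniq e1 he1 (hgspec e1 he1).2
    have h2 : e2 = e := huniq e2 he2 (heq ▸ (hgspec e2 he2).2)
    rw [h1, h2]
  refine ⟨⟨hgraft, hdisj, hunion, hedge⟩, fun b hb => (key b hb).choose_spec.2.2.1, ?_⟩
  rw [← himg, Set.ncard_image_of_injOn hinj, hcard]
end
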